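/- arXiv:1504.04806 — 5 statements merged into one kernel-verified Lean document; each statement's English description precedes it below -/
import Mathlib

section
/- Let D be a K-GIC digraph with inner vertex set V_I and out-arborescences {T_i : i ∈ V_I}. For a vertex v with v ∈ V(T_i), v ∈ V(T_j) for distinct i, j ∈ V_I, and v ∉ V_I, let L_{T_i}(v) denote the set of leaf vertices of T_i reachable from v by a directed path in T_i, and similarly L_{T_j}(v). Then L_{T_i}(v) ⊆ V_I \ {i, j} and L_{T_j}(v) ⊆ V_I \ {i, j}; in particular j ∉ L_{T_i}(v) and i ∉ L_{T_j}(v). -/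
open Finset

/-- A digraph: a finite vertex set together with an arc set with no self-loops. -/
structure Digr (V : Type) where
  verts : Finset V
  arcs : Finset (V × V)
  arcs_sub : ∀ a ∈ arcs, a.1 ∈ verts ∧ a.2 ∈ verts
  no_loops : ∀ a ∈ arcs, a.1 ≠ a.2

variable {V : Type} [DecidableEq V]

namespace Digr

/-- Out-neighborhood of `v`. -/
def outNbr (D : Digr V) (v : V) : Finset V :=
  (D.arcs.filter (fun a => a.1 = v)).image Prod.snd

/-- A directed path: a nonempty list of distinct vertices of `D` with an arc between
each consecutive pair. -/
def IsPath (D : Digr V) (p : List V) : Prop :=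
  p ≠ [] ∧ p.Nodup ∧ (∀ v ∈ p, v ∈ D.verts) ∧ p.Chain' (fun u w => (u, w) ∈ D.arcs)

/-- A directed cycle: a directed path whose last vertex has an arc back to the first. -/
def IsCycle (D : Digr V) (p : List V) : Prop :=
  D.IsPath p ∧ ∃ a b, p.head? = some a ∧ p.getLast? = some b ∧ (b, a) ∈ D.arcs

/-- An out-arborescence rooted at `r`: every vertex is reachable from the root by
exactly one directed path. -/
def IsOutArb (T : Digr V) (r : V) : Prop :=
  r ∈ T.verts ∧ ∀ v ∈ T.verts,
    ∃! p : List V, T.IsPath p ∧ p.head? = some r ∧ p.getLast? = some v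

/-- The leaves of a digraph: vertices with no out-neighbors. -/
def leaves (T : Digr V) : Finset V :=
  T.verts.filter (fun v => T.outNbr v = ∅)

/-- `T` is a sub-digraph of `D`. -/
def Sub (T D : Digr V) : Prop :=
  T.verts ⊆ D.verts ∧ T.arcs ⊆ D.arcs

/-- A P-path from `i` to `j` (w.r.t. inner vertex set `VI`): a directed path whose first
and last vertices are the distinct inner vertices `i` and `j` and all of whose other
vertices lie outside `VI`. -/
def IsPPathFromTo (D : Digr V) (VI : Finset V) (i j : V) (p : List V) : Prop :=
  D.IsPath p ∧ p.head? = some i ∧ p.getLast? = some j ∧ i ∈ VI ∧ j ∈ VI ∧ i ≠ j ∧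
    ∀ v ∈ (p.drop 1).dropLast, v ∉ VI

/-- `D` is a GIC digraph with inner vertex set `VI` and out-arborescences `T i` (`i ∈ VI`):
each `T i` is a sub-digraph of `D` that is an out-arborescence rooted at `i` with leaf set
exactly `VI \ {i}`; `D` is the union of the `T i`; `D` has no I-cycle (no directed cycle
containing exactly one inner vertex); and for every ordered pair of distinct inner vertices
there is exactly one P-path between them. -/
def IsGIC (D : Digr V) (VI : Finset V) (T : V → Digr V) : Prop :=
  VI ⊆ D.verts ∧
  (∀ i ∈ VI, (T i).Sub D ∧ (T i).IsOutArb i ∧ (T i).leaves = VI.erase i) ∧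
  D.verts = VI.biUnion (fun i => (T i).verts) ∧
  D.arcs = VI.biUnion (fun i => (T i).arcs) ∧
  (∀ c : List V, D.IsCycle c → (c.toFinset ∩ VI).card ≠ 1) ∧
  (∀ i ∈ VI, ∀ j ∈ VI, i ≠ j → ∃! p : List V, D.IsPPathFromTo VI i j p)

/-- The sub-digraph of `D` induced on `U`. -/
def induced (D : Digr V) (U : Finset V) : Digr V where
  verts := D.verts ∩ U
  arcs := D.arcs.filter (fun a => a.1 ∈ U ∧ a.2 ∈ U)
  arcs_sub := by
    intro a ha
    rw [Finset.mem_filter] at ha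
    have h := D.arcs_sub a ha.1
    exact ⟨Finset.mem_inter.2 ⟨h.1, ha.2.1⟩, Finset.mem_inter.2 ⟨h.2, ha.2.2⟩⟩
  no_loops := by
    intro a ha
    rw [Finset.mem_filter] at ha
    exact D.no_loops a ha.1

/-- A digraph is acyclic if it has no directed cycle. -/
def Acyclic (D : Digr V) : Prop := ∀ c : List V, ¬ D.IsCycle c

/-- The maximum number of vertices of an acyclic induced sub-digraph of `D`. -/
noncomputable def MAIS (D : Digr V) : ℕ :=
  letI := Classical.propDecidable
  ((D.verts.powerset).filter (fun U => (D.induced U).Acyclic)).sup Finset.card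

end Digr

/-- A valid index code for `D`: an encoding map `F` such that every receiver `i ∈ V(D)`
can decode its message `x i` from `F x` and its side information `{x j : j ∈ N⁺_D(i)}`. -/
def IsValidCode {M C : Type} (D : Digr V) (F : (V → M) → C) : Prop :=
  ∀ x x' : V → M, F x = F x' →
    ∀ i ∈ D.verts, (∀ j ∈ D.outNbr i, x j = x' j) → x i = x' i


section Aux

open List

lemma chain'_last_or_next {α : Type} {R : α → α → Prop} :
    ∀ {p : List α}, p.Chain' R → ∀ w ∈ p, p.getLast? = some w ∨ ∃ x, R w x := by
  intro p
  induction p with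
  | nil => simp
  | cons a l ih =>
    intro hc w hw
    rcases List.mem_cons.mp hw with rfl | hw
    · cases l with
      | nil => left; rfl
      | cons b l' => exact Or.inr ⟨b, (List.isChain_cons_cons.mp hc).1⟩
    · cases l with
      | nil => simp at hw
      | cons b l' =>
        rcases ih hc.tail w hw with h | h
        · left; rw [List.getLast?_cons_cons]; exact h
        · exact Or.inr h

lemma chain'_head_or_prev {α : Type} {R : α → α → Prop} :
    ∀ {p : List α}, p.Chain' R → ∀ w ∈ p, p.head? = some w ∨ ∃ u ∈ p, R u w := by
  intro p
  induction p with
  | nil => simp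
  | cons a l ih =>
    intro hc w hw
    rcases List.mem_cons.mp hw with rfl | hw
    · left; rfl
    · cases l with
      | nil => simp at hw
      | cons b l' =>
        rcases ih hc.tail w hw with h | h
        · right
          have : w = b := by simpa using h.symm
          subst this
          exact ⟨a, List.mem_cons_self, (List.isChain_cons_cons.mp hc).1⟩
        · rcases h with ⟨u, hu, hR⟩
          exact Or.inr ⟨u, List.mem_cons_of_mem a hu, hR⟩

lemma exists_split_first {α : Type} (P : α → Prop) :
    ∀ (r : List α), (∃ x ∈ r, P x) → ∃ a u b, r = a ++ u :: b ∧ P u ∧ ∀ x ∈ a, ¬ P x := by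
  intro r
  induction r with
  | nil => simp
  | cons c l ih =>
    intro h
    by_cases hc : P c
    · exact ⟨[], c, l, rfl, hc, by simp⟩
    · have hl : ∃ x ∈ l, P x := by
        rcases h with ⟨x, hx, hPx⟩
        rcases List.mem_cons.mp hx with rfl | hx
        · exact absurd hPx hc
        · exact ⟨x, hx, hPx⟩
      rcases ih hl with ⟨a, u, b, heq, hPu, ha⟩
      refine ⟨c :: a, u, b, by rw [heq]; rfl, hPu, ?_⟩
      intro x hx
      rcases List.mem_cons.mp hx with rfl | hx
      · exact hc
      · exact ha x hx

variable {V : Type} [DecidableEq V]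

lemma mem_outNbr_of_arc (T : Digr V) {w x : V} (h : (w, x) ∈ T.arcs) : x ∈ T.outNbr w := by
  unfold Digr.outNbr
  rw [Finset.mem_image]
  exact ⟨(w, x), Finset.mem_filter.mpr ⟨h, rfl⟩, rfl⟩

lemma last_of_noOut (T : Digr V) {p : List V} (hp : T.IsPath p) {w : V} (hw : w ∈ p)
    (hno : T.outNbr w = ∅) : p.getLast? = some w := by
  rcases chain'_last_or_next hp.2.2.2 w hw with h | ⟨x, hx⟩
  · exact h
  · exact absurd (mem_outNbr_of_arc T hx) (by rw [hno]; simp)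

lemma no_arc_to_root (D : Digr V) (VI : Finset V) (T : V → Digr V)
    (hGIC : D.IsGIC VI T) {i : V} (hi : i ∈ VI) {w : V}
    (hw : (w, i) ∈ (T i).arcs) : False := by
  obtain ⟨hVIsub, hT, hvert, harc, hcyc, hP⟩ := hGIC
  obtain ⟨hsub, harb, hleaves⟩ := hT i hi
  have hwv : w ∈ (T i).verts := ((T i).arcs_sub _ hw).1
  have hwi : w ≠ i := (T i).no_loops _ hw
  by_cases hwVI : w ∈ VI
  · have hwl : w ∈ (T i).leaves := by
      rw [hleaves]; exact Finset.mem_erase.mpr ⟨hwi, hwVI⟩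
    have hno : (T i).outNbr w = ∅ := (Finset.mem_filter.mp hwl).2
    exact absurd (mem_outNbr_of_arc _ hw) (by rw [hno]; simp)
  · obtain ⟨R, ⟨hRpath, hRhead, hRlast⟩, -⟩ := harb.2 w hwv
    have hRVI : ∀ x ∈ R, x ∈ VI → x = i := by
      intro x hx hxVI
      by_contra hxi
      have hxl : x ∈ (T i).leaves := by
        rw [hleaves]; exact Finset.mem_erase.mpr ⟨hxi, hxVI⟩
      have hno : (T i).outNbr x = ∅ := (Finset.mem_filter.mp hxl).2
      have hlast := last_of_noOut (T i) hRpath hx hno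
      rw [hRlast] at hlast
      have : w = x := Option.some.inj hlast
      exact hwVI (this ▸ hxVI)
    have hDpath : D.IsPath R :=
      ⟨hRpath.1, hRpath.2.1, fun x hx => hsub.1 (hRpath.2.2.1 x hx),
        List.IsChain.imp (fun a b h => hsub.2 h) hRpath.2.2.2⟩
    have hcycR : D.IsCycle R := ⟨hDpath, i, w, hRhead, hRlast, hsub.2 hw⟩
    have hiR : i ∈ R := by
      have := List.mem_of_mem_head? (l := R) (a := i)
      exact this (by rw [hRhead]; rfl)
    have hset : R.toFinset ∩ VI = {i} := by
      ext x
      simp only [Finset.mem_inter, List.mem_toFinset, Finset.mem_singleton]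
      constructor
      · rintro ⟨hx, hxVI⟩; exact hRVI x hx hxVI
      · rintro rfl; exact ⟨hiR, hi⟩
    exact hcyc R hcycR (by rw [hset]; simp)

lemma no_path_to_other_root (D : Digr V) (VI : Finset V) (T : V → Digr V)
    (hGIC : D.IsGIC VI T)
    {i j : V} (hi : i ∈ VI) (hj : j ∈ VI) (hij : i ≠ j)
    {v : V} (hvi : v ∈ (T i).verts) (hvj : v ∈ (T j).verts) (hv : v ∉ VI)
    {p : List V} (hp : (T i).IsPath p) (hph : p.head? = some v)
    (hpl : p.getLast? = some j) : False := by
  have hGIC' := hGIC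
  obtain ⟨hVIsub, hT, hvert, harc, hcyc, hPP⟩ := hGIC
  obtain ⟨hsubi, harbi, hleavesi⟩ := hT i hi
  obtain ⟨hsubj, harbj, hleavesj⟩ := hT j hj
  -- path q in T j from j to v
  obtain ⟨q, ⟨hq, hqh, hql⟩, -⟩ := harbj.2 v hvj
  have hvj' : v ≠ j := fun h => hv (h ▸ hj)
  -- inner vertices on q are all j
  have hqVI : ∀ w ∈ q, w ∈ VI → w = j := by
    intro w hw hwVI
    by_contra hwj
    have hwl : w ∈ (T j).leaves := by
      rw [hleavesj]; exact Finset.mem_erase.mpr ⟨hwj, hwVI⟩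
    have hno : (T j).outNbr w = ∅ := (Finset.mem_filter.mp hwl).2
    have hlast := last_of_noOut (T j) hq hw hno
    rw [hql] at hlast
    exact hv (Option.some.inj hlast ▸ hwVI)
  -- inner vertices on p are all j
  have hpVI : ∀ w ∈ p, w ∈ VI → w = j := by
    intro w hw hwVI
    by_cases hwi : w = i
    · subst hwi
      rcases chain'_head_or_prev hp.2.2.2 w hw with h | ⟨u, hu, hR⟩
      · rw [hph] at h
        exact absurd (Option.some.inj h) (fun hh => hv (hh ▸ hwVI))
      · exact absurd hR (fun hR => no_arc_to_root D VI T hGIC' hi hR)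
    · by_contra hwj
      have hwl : w ∈ (T i).leaves := by
        rw [hleavesi]; exact Finset.mem_erase.mpr ⟨hwi, hwVI⟩
      have hno : (T i).outNbr w = ∅ := (Finset.mem_filter.mp hwl).2
      have hlast := last_of_noOut (T i) hp hw hno
      rw [hpl] at hlast
      exact hwj (Option.some.inj hlast).symm
  -- q = j :: r
  obtain ⟨j0, r, rfl⟩ : ∃ j0 r, q = j0 :: r := by
    cases q with
    | nil => simp at hqh
    | cons a l => exact ⟨a, l, rfl⟩
  have hj0 : j = j0 := by simpa using hqh.symm
  subst hj0
  have hvq : v ∈ j :: r := by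
    have := List.mem_of_mem_getLast? (l := j :: r) (a := v)
    exact this (by rw [hql]; rfl)
  have hvr : v ∈ r := by
    rcases List.mem_cons.mp hvq with h | h
    · exact absurd h hvj'
    · exact h
  have hvp : v ∈ p := List.mem_of_mem_head? (by rw [hph]; rfl)
  -- split r at first vertex on p
  obtain ⟨a, u, b, hreq, hup, haP⟩ := exists_split_first (· ∈ p) r ⟨v, hvr, hvp⟩
  -- split p at u
  obtain ⟨s, t, hpeq⟩ : ∃ s t, p = s ++ u :: t := List.append_of_mem hup
  have hqnd : (j :: r).Nodup := hq.2.1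
  have hjr : j ∉ r := (List.nodup_cons.mp hqnd).1
  have hur : u ∈ r := by rw [hreq]; simp
  have huj : u ≠ j := fun h => hjr (h ▸ hur)
  -- getLast? (u :: t) = some j
  have hut_last : (u :: t).getLast? = some j := by
    rw [hpeq] at hpl
    rwa [List.getLast?_append_of_ne_nil _ (List.cons_ne_nil u t)] at hpl
  have ht_ne : t ≠ [] := by
    intro h; subst h
    simp at hut_last
    exact huj hut_last
  have ht_last : t.getLast? = some j := by
    cases t with
    | nil => exact absurd rfl ht_ne
    | cons c l => rwa [List.getLast?_cons_cons] at hut_last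
  obtain ⟨t₁, rfl⟩ : ∃ t₁, t = t₁ ++ [j] := by
    refine ⟨t.dropLast, ?_⟩
    have h1 := List.dropLast_append_getLast ht_ne
    have h2 : t.getLast ht_ne = j := by
      rw [List.getLast?_eq_getLast ht_ne] at ht_last
      exact Option.some.inj ht_last
    rw [h2] at h1
    exact h1.symm
  -- the cycle
  set C : List V := (j :: a) ++ (u :: t₁) with hC
  -- memberships
  have haq : ∀ x ∈ a, x ∈ j :: r := by
    intro x hx; rw [hreq]; simp [hx]
  have hutp : ∀ x ∈ u :: t₁, x ∈ p := by
    intro x hx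
    rw [hpeq]
    rcases List.mem_cons.mp hx with rfl | hx
    · simp
    · simp [hx]
  -- j ∉ u :: t₁
  have hpnd : p.Nodup := hp.2.1
  have hput : (u :: (t₁ ++ [j])).Nodup := by
    rw [hpeq] at hpnd
    exact (List.nodup_append.mp hpnd).2.1
  have hjut : j ∉ u :: t₁ := by
    intro hjm
    rcases List.mem_cons.mp hjm with rfl | hjm
    · exact huj rfl
    · have h := List.nodup_append'.mp ((List.nodup_cons.mp hput).2)
      exact h.2.2 hjm (by simp)
  -- nodup of C
  have hnd_ja : (j :: a).Nodup := by
    have : (j :: a).Sublist (j :: r) := by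
      rw [hreq]
      exact List.Sublist.cons₂ j (List.sublist_append_left a (u :: b))
    exact this.nodup hqnd
  have hnd_ut : (u :: t₁).Nodup := by
    have h : (u :: t₁).Sublist (u :: (t₁ ++ [j])) :=
      List.Sublist.cons₂ u (List.sublist_append_left t₁ [j])
    exact h.nodup hput
  have hdisj : ∀ x ∈ j :: a, x ∉ u :: t₁ := by
    intro x hx hx'
    rcases List.mem_cons.mp hx with rfl | hx
    · exact hjut hx'
    · exact haP x hx (hutp x hx')
  have hndC : C.Nodup := List.Nodup.append hnd_ja hnd_ut hdisj
  -- verts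
  have hvertsC : ∀ x ∈ C, x ∈ D.verts := by
    intro x hx
    rcases List.mem_append.mp hx with hx | hx
    · rcases List.mem_cons.mp hx with rfl | hx
      · exact hVIsub hj
      · exact hsubj.1 (hq.2.2.1 x (haq x hx))
    · exact hsubi.1 (hp.2.2.1 x (hutp x hx))
  -- chains
  have hchq : (j :: r).Chain' (fun x y => (x, y) ∈ D.arcs) :=
    List.IsChain.imp (fun x y h => hsubj.2 h) hq.2.2.2
  have hchp : p.Chain' (fun x y => (x, y) ∈ D.arcs) :=
    List.IsChain.imp (fun x y h => hsubi.2 h) hp.2.2.2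
  -- chain on prefix j :: a ++ [u] of q
  have hchq' : ((j :: a) ++ [u]).Chain' (fun x y => (x, y) ∈ D.arcs) := by
    have : (j :: r) = ((j :: a) ++ [u]) ++ b := by rw [hreq]; simp
    rw [this] at hchq
    exact (List.isChain_append.mp hchq).1
  have hch_ja : (j :: a).Chain' (fun x y => (x, y) ∈ D.arcs) :=
    (List.isChain_append.mp hchq').1
  have hconn1 : ∀ x ∈ (j :: a).getLast?, ((x, u) ∈ D.arcs) := by
    intro x hx
    exact (List.isChain_append.mp hchq').2.2 x hx u rfl
  -- chain on suffix u :: t of p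
  have hchut : (u :: (t₁ ++ [j])).Chain' (fun x y => (x, y) ∈ D.arcs) := by
    rw [hpeq] at hchp
    exact (List.isChain_append.mp hchp).2.1
  have hchut' : ((u :: t₁) ++ [j]).Chain' (fun x y => (x, y) ∈ D.arcs) := hchut
  have hch_ut : (u :: t₁).Chain' (fun x y => (x, y) ∈ D.arcs) :=
    (List.isChain_append.mp hchut').1
  have hconn2 : ∀ x ∈ (u :: t₁).getLast?, ((x, j) ∈ D.arcs) := by
    intro x hx
    exact (List.isChain_append.mp hchut').2.2 x hx j rfl
  have hchC : C.Chain' (fun x y => (x, y) ∈ D.arcs) := by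
    rw [hC]; apply List.isChain_append.mpr
    exact ⟨hch_ja, hch_ut, fun x hx y hy => by
      have : y = u := by simpa using hy.symm
      subst this
      exact hconn1 x hx⟩
  -- C is a cycle
  have hCpath : D.IsPath C := ⟨by simp [hC], hndC, hvertsC, hchC⟩
  have hClast : C.getLast? = (u :: t₁).getLast? := by
    rw [hC]
    exact List.getLast?_append_of_ne_nil _ (List.cons_ne_nil u t₁)
  set w₀ := (u :: t₁).getLast (List.cons_ne_nil u t₁) with hw₀
  have hut₁_last : (u :: t₁).getLast? = some w₀ :=
    List.getLast?_eq_getLast _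
  have hCcyc : D.IsCycle C := by
    refine ⟨hCpath, j, w₀, ?_, ?_, ?_⟩
    · rw [hC]; rfl
    · rw [hClast, hut₁_last]
    · exact hconn2 w₀ (by rw [hut₁_last]; rfl)
  -- exactly one inner vertex
  have hset : C.toFinset ∩ VI = {j} := by
    ext x
    simp only [Finset.mem_inter, List.mem_toFinset, Finset.mem_singleton]
    constructor
    · rintro ⟨hx, hxVI⟩
      rcases List.mem_append.mp hx with hx | hx
      · rcases List.mem_cons.mp hx with rfl | hx
        · rfl
        · exact hqVI x (haq x hx) hxVI
      · exact hpVI x (hutp x hx) hxVI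
    · rintro rfl
      exact ⟨by rw [hC]; simp, hj⟩
  exact hcyc C hCcyc (by rw [hset]; simp)

lemma side_lemma (D : Digr V) (VI : Finset V) (T : V → Digr V)
    (hGIC : D.IsGIC VI T)
    {i j : V} (hi : i ∈ VI) (hj : j ∈ VI) (hij : i ≠ j)
    {v : V} (hvi : v ∈ (T i).verts) (hvj : v ∈ (T j).verts) (hv : v ∉ VI) :
    ∀ l ∈ (T i).leaves,
      (∃ p : List V, (T i).IsPath p ∧ p.head? = some v ∧ p.getLast? = some l) →
      l ∈ VI ∧ l ≠ i ∧ l ≠ j := by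
  intro l hl hex
  have hleaves : (T i).leaves = VI.erase i := (hGIC.2.1 i hi).2.2
  rw [hleaves] at hl
  have hlVI : l ∈ VI := (Finset.mem_erase.mp hl).2
  have hli : l ≠ i := (Finset.mem_erase.mp hl).1
  refine ⟨hlVI, hli, ?_⟩
  rintro rfl
  obtain ⟨p, hp, hph, hpl⟩ := hex
  exact no_path_to_other_root D VI T hGIC hi hlVI hij hvi hvj hv hp hph hpl

end Aux

/-- Lemma 2: for a common non-inner vertex `v` of two trees `T i`, `T j` of a GIC digraph,
the leaves of `T i` (resp. `T j`) reachable from `v` by a directed path in the tree all lie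
in `V_I \ {i, j}`; in particular `j` (resp. `i`) is not among them. -/
theorem stmt1 (D : Digr V) (VI : Finset V) (T : V → Digr V) (K : ℕ)
    (hGIC : D.IsGIC VI T) (hK : VI.card = K)
    (i j : V) (hi : i ∈ VI) (hj : j ∈ VI) (hij : i ≠ j)
    (v : V) (hvi : v ∈ (T i).verts) (hvj : v ∈ (T j).verts) (hv : v ∉ VI) :
    (∀ l ∈ (T i).leaves,
        (∃ p : List V, (T i).IsPath p ∧ p.head? = some v ∧ p.getLast? = some l) →
        l ∈ VI ∧ l ≠ i ∧ l ≠ j) ∧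
    (∀ l ∈ (T j).leaves,
        (∃ p : List V, (T j).IsPath p ∧ p.head? = some v ∧ p.getLast? = some l) →
        l ∈ VI ∧ l ≠ i ∧ l ≠ j) := by
  exact ⟨side_lemma D VI T hGIC hi hj hij hvi hvj hv,
    fun l hl hex => (side_lemma D VI T hGIC hj hi hij.symm hvj hvi hv l hl hex).imp
      id (fun h => ⟨h.2, h.1⟩)⟩
end

section
/- Let D be an ICC digraph with inner vertex set V_I = {v^1_{n_1}, …, v^k_{n_k}} (the last vertices of the k disjoint paths). Then D contains no I-cycle, i.e., no directed cycle of D contains exactly one vertex of V_I. -/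
open Finset

variable {V : Type} [DecidableEq V]

/-- The set of arcs along a list of vertices (consecutive pairs). -/
def listArcs (p : List V) : Finset (V × V) := (p.zip p.tail).toFinset

/-- `D` is an ICC digraph with `k ≥ 2` vertex-disjoint directed paths `P i` (with first
vertex `firstv i` and last vertex `lastv i`), connecting paths with internal-vertex lists
`Q i j` ending at a vertex `tgt i j` of `P j`, all these vertex sets mutually disjoint and
together comprising `V(D)`, the arcs of `D` being exactly the arcs along these paths, and
each first vertex having in-degree at least one. -/
structure IsICC (D : Digr V) (k : ℕ) (P : Fin k → List V)
    (Q : Fin k → Fin k → List V) (tgt : Fin k → Fin k → V)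
    (firstv lastv : Fin k → V) : Prop where
  two_le : 2 ≤ k
  head_eq : ∀ i, (P i).head? = some (firstv i)
  last_eq : ∀ i, (P i).getLast? = some (lastv i)
  path_P : ∀ i, D.IsPath (P i)
  disj_P : ∀ i j, i ≠ j → ∀ v ∈ P i, v ∉ P j
  conn_path : ∀ i j, i ≠ j → D.IsPath (lastv i :: (Q i j ++ [tgt i j]))
  tgt_mem : ∀ i j, i ≠ j → tgt i j ∈ P j
  disj_QP : ∀ i j, i ≠ j → ∀ v ∈ Q i j, ∀ m, v ∉ P m
  disj_QQ : ∀ i j i' j', i ≠ j → i' ≠ j' → (i, j) ≠ (i', j') → ∀ v ∈ Q i j, v ∉ Q i' j'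
  verts_eq : D.verts = (Finset.univ.biUnion fun i => (P i).toFinset) ∪
      (Finset.univ.biUnion fun p : Fin k × Fin k =>
        if p.1 ≠ p.2 then (Q p.1 p.2).toFinset else ∅)
  arcs_eq : D.arcs = (Finset.univ.biUnion fun i => listArcs (P i)) ∪
      (Finset.univ.biUnion fun p : Fin k × Fin k =>
        if p.1 ≠ p.2 then listArcs (lastv p.1 :: (Q p.1 p.2 ++ [tgt p.1 p.2])) else ∅)
  indeg : ∀ j, ∃ u ∈ D.verts, (u, firstv j) ∈ D.arcs

section ICCAux

variable {k : ℕ} {D : Digr V} {P : Fin k → List V} {Q : Fin k → Fin k → List V}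
  {tgt : Fin k → Fin k → V} {firstv lastv : Fin k → V}

open Classical in
/-- The index of the inner vertex that the forced out-walk from `v` leads to. -/
noncomputable def iccPsi (hk : 0 < k) (P : Fin k → List V) (Q : Fin k → Fin k → List V)
    (v : V) : Fin k :=
  if h : ∃ j, v ∈ P j then h.choose
  else if h2 : ∃ p : Fin k × Fin k, p.1 ≠ p.2 ∧ v ∈ Q p.1 p.2 then h2.choose.2
  else ⟨0, hk⟩

lemma mem_listArcs_infix : ∀ {p : List V} {u w : V}, (u, w) ∈ listArcs p →
    ∃ s t, p = s ++ u :: w :: t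
  | [], u, w, h => by simp [listArcs] at h
  | [x], u, w, h => by simp [listArcs] at h
  | x :: y :: r, u, w, h => by
    simp only [listArcs, List.tail_cons, List.zip_cons_cons, List.toFinset_cons,
      Finset.mem_insert, List.mem_toFinset, Prod.mk.injEq] at h
    rcases h with ⟨h1, h2⟩ | h
    · exact ⟨[], r, by rw [h1, h2]; rfl⟩
    · obtain ⟨s, t, hst⟩ := mem_listArcs_infix (p := y :: r)
        (by simpa [listArcs, List.mem_toFinset] using h)
      exact ⟨x :: s, t, by rw [List.cons_append, ← hst]⟩

lemma infix_not_last {p : List V} {u w : V} (hnd : p.Nodup)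
    (h : ∃ s t, p = s ++ u :: w :: t) : p.getLast? ≠ some u := by
  obtain ⟨s, t, rfl⟩ := h
  intro hl
  have h1 : (s ++ u :: w :: t).getLast? = some ((w :: t).getLast (by simp)) := by
    rw [show s ++ u :: w :: t = (s ++ [u]) ++ w :: t by simp,
      List.getLast?_append, List.getLast?_eq_getLast (l := w :: t) (by simp)]
    rfl
  rw [h1] at hl
  have hg : (w :: t).getLast (by simp) ∈ w :: t := List.getLast_mem _
  rw [Option.some_inj] at hl
  have hnd' : u ∉ w :: t := by
    have := List.disjoint_of_nodup_append (l₁ := s ++ [u]) (l₂ := w :: t)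
      (by simpa using hnd)
    exact this (by simp)
  exact hnd' (hl ▸ hg)

lemma infix_head {x : V} {M : List V} {w : V} (hnd : (x :: M).Nodup)
    (h : ∃ s t, x :: M = s ++ x :: w :: t) : M.head? = some w := by
  obtain ⟨s, t, hst⟩ := h
  cases s with
  | nil =>
    simp only [List.nil_append, List.cons.injEq] at hst
    rw [hst.2]; rfl
  | cons z s' =>
    exfalso
    simp only [List.cons_append, List.cons.injEq] at hst
    have : x ∈ x :: M := List.mem_cons_self
    have hxM : x ∉ M := (List.nodup_cons.mp hnd).1
    apply hxM
    rw [hst.2]; simp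

lemma infix_tail_mem {x : V} {M : List V} {u w : V}
    (h : ∃ s t, x :: M = s ++ u :: w :: t) : w ∈ M ∧ (u = x ∨ u ∈ M) := by
  obtain ⟨s, t, hst⟩ := h
  cases s with
  | nil =>
    simp only [List.nil_append, List.cons.injEq] at hst
    exact ⟨hst.2 ▸ (List.mem_cons_self (a := w) (l := t)), Or.inl hst.1.symm⟩
  | cons z s' =>
    simp only [List.cons_append, List.cons.injEq] at hst
    rw [hst.2]
    exact ⟨by simp, Or.inr (by simp)⟩

lemma iccPsi_P (hICC : IsICC D k P Q tgt firstv lastv) (hk : 0 < k)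
    {v : V} {j : Fin k} (hv : v ∈ P j) : iccPsi hk P Q v = j := by
  have h : ∃ j', v ∈ P j' := ⟨j, hv⟩
  unfold iccPsi
  rw [dif_pos h]
  by_contra hne
  exact hICC.disj_P _ _ hne v h.choose_spec hv

lemma iccPsi_Q (hICC : IsICC D k P Q tgt firstv lastv) (hk : 0 < k)
    {v : V} {i j : Fin k} (hij : i ≠ j) (hv : v ∈ Q i j) : iccPsi hk P Q v = j := by
  have h1 : ¬ ∃ j', v ∈ P j' := fun ⟨m, hm⟩ => hICC.disj_QP i j hij v hv m hm
  have h2 : ∃ p : Fin k × Fin k, p.1 ≠ p.2 ∧ v ∈ Q p.1 p.2 := ⟨(i, j), hij, hv⟩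
  unfold iccPsi
  rw [dif_neg h1, dif_pos h2]
  obtain ⟨hne, hv'⟩ := h2.choose_spec
  by_contra hne2
  have hpair : (i, j) ≠ (h2.choose.1, h2.choose.2) := by
    intro he
    rw [Prod.mk.injEq] at he
    exact hne2 he.2.symm
  exact hICC.disj_QQ i j h2.choose.1 h2.choose.2 hij hne hpair v hv hv'

lemma lastv_mem_P (hICC : IsICC D k P Q tgt firstv lastv) (i : Fin k) :
    lastv i ∈ P i :=
  List.mem_of_mem_getLast? (by rw [hICC.last_eq i]; rfl)

lemma iccPsi_lastv (hICC : IsICC D k P Q tgt firstv lastv) (hk : 0 < k) (i : Fin k) :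
    iccPsi hk P Q (lastv i) = i :=
  iccPsi_P hICC hk (lastv_mem_P hICC i)

lemma arc_cases (hICC : IsICC D k P Q tgt firstv lastv) {u w : V}
    (h : (u, w) ∈ D.arcs) :
    (∃ m s t, P m = s ++ u :: w :: t) ∨
    (∃ i j, i ≠ j ∧ ∃ s t, lastv i :: (Q i j ++ [tgt i j]) = s ++ u :: w :: t) := by
  rw [hICC.arcs_eq, Finset.mem_union] at h
  rcases h with h | h
  · simp only [Finset.mem_biUnion, Finset.mem_univ, true_and] at h
    obtain ⟨m, hm⟩ := h
    exact Or.inl ⟨m, mem_listArcs_infix hm⟩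
  · simp only [Finset.mem_biUnion, Finset.mem_univ, true_and] at h
    obtain ⟨⟨i, j⟩, hm⟩ := h
    by_cases hij : i ≠ j
    · rw [if_pos hij] at hm
      exact Or.inr ⟨i, j, hij, mem_listArcs_infix hm⟩
    · rw [if_neg hij] at hm
      simp at hm

lemma conn_getLast (i j : Fin k) :
    (lastv i :: (Q i j ++ [tgt i j])).getLast? = some (tgt i j) := by
  rw [show lastv i :: (Q i j ++ [tgt i j]) = (lastv i :: Q i j) ++ [tgt i j] by simp]
  exact List.getLast?_concat

lemma iccPsi_step (hICC : IsICC D k P Q tgt firstv lastv) (hk : 0 < k) {u w : V}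
    (h : (u, w) ∈ D.arcs) (hu : ∀ m, u ≠ lastv m) :
    iccPsi hk P Q w = iccPsi hk P Q u := by
  rcases arc_cases hICC h with ⟨m, s, t, hm⟩ | ⟨i, j, hij, s, t, hm⟩
  · have hu' : u ∈ P m := by rw [hm]; simp
    have hw' : w ∈ P m := by rw [hm]; simp
    rw [iccPsi_P hICC hk hu', iccPsi_P hICC hk hw']
  · have hnd : (lastv i :: (Q i j ++ [tgt i j])).Nodup := (hICC.conn_path i j hij).2.1
    have hmem := infix_tail_mem (x := lastv i) ⟨s, t, hm⟩
    rcases hmem.2 with h1 | h1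
    · exact absurd h1 (hu i)
    have hulast : u ≠ tgt i j := by
      intro he
      exact infix_not_last hnd ⟨s, t, hm⟩ (by rw [conn_getLast, he])
    have huQ : u ∈ Q i j := by
      rcases List.mem_append.mp h1 with h2 | h2
      · exact h2
      · simp only [List.mem_singleton] at h2
        exact absurd h2 hulast
    rw [iccPsi_Q hICC hk hij huQ]
    rcases List.mem_append.mp hmem.1 with h2 | h2
    · rw [iccPsi_Q hICC hk hij h2]
    · simp only [List.mem_singleton] at h2
      rw [h2, iccPsi_P hICC hk (hICC.tgt_mem i j hij)]

lemma iccPsi_out (hICC : IsICC D k P Q tgt firstv lastv) (hk : 0 < k) {i : Fin k} {w : V}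
    (h : (lastv i, w) ∈ D.arcs) : iccPsi hk P Q w ≠ i := by
  rcases arc_cases hICC h with ⟨m, s, t, hm⟩ | ⟨i', j', hij, s, t, hm⟩
  · exfalso
    have hlm : lastv i ∈ P m := by rw [hm]; simp
    have hmi : m = i := by
      by_contra hne
      exact hICC.disj_P i m (fun he => hne he.symm) (lastv i) (lastv_mem_P hICC i) hlm
    subst hmi
    exact infix_not_last (hICC.path_P m).2.1 ⟨s, t, hm⟩ (hICC.last_eq m)
  · have hnd : (lastv i' :: (Q i' j' ++ [tgt i' j'])).Nodup :=
      (hICC.conn_path i' j' hij).2.1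
    have hmem := infix_tail_mem (x := lastv i') ⟨s, t, hm⟩
    rcases hmem.2 with h1 | h1
    · -- u = lastv i' so i = i'
      have hii : i = i' := by
        by_contra hne
        exact hICC.disj_P i i' hne (lastv i) (lastv_mem_P hICC i)
          (h1 ▸ lastv_mem_P hICC i')
      subst hii
      have hh : (Q i j' ++ [tgt i j']).head? = some w :=
        infix_head hnd ⟨s, t, by rw [← h1]; exact hm⟩
      cases hq : Q i j' with
      | nil =>
        rw [hq, List.nil_append, List.head?_cons, Option.some_inj] at hh
        rw [← hh, iccPsi_P hICC hk (hICC.tgt_mem i j' hij)]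
        exact Ne.symm hij
      | cons y ys =>
        rw [hq, List.cons_append, List.head?_cons, Option.some_inj] at hh
        have hy : w ∈ Q i j' := by rw [hq, ← hh]; simp
        rw [iccPsi_Q hICC hk hij hy]
        exact Ne.symm hij
    · exfalso
      rcases List.mem_append.mp h1 with h2 | h2
      · exact hICC.disj_QP i' j' hij _ h2 i (lastv_mem_P hICC i)
      · simp only [List.mem_singleton] at h2
        exact infix_not_last hnd ⟨s, t, hm⟩ (by rw [conn_getLast, h2])

lemma iccPsi_chain (hICC : IsICC D k P Q tgt firstv lastv) (hk : 0 < k) :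
    ∀ (l : List V), l.Chain' (fun u w => (u, w) ∈ D.arcs) →
    (∀ x ∈ l, ∀ m, x ≠ lastv m) → ∀ a b, l.head? = some a → l.getLast? = some b →
    iccPsi hk P Q a = iccPsi hk P Q b
  | [] => by intro _ _ a b ha _; simp at ha
  | [x] => by
    intro _ _ a b ha hb
    simp only [List.head?_cons, Option.some_inj] at ha
    simp only [List.getLast?_singleton, Option.some_inj] at hb
    rw [← ha, ← hb]
  | x :: y :: r => by
    intro hch hni a b ha hb
    simp only [List.head?_cons, Option.some_inj] at ha
    unfold List.Chain' at hch; rw [List.isChain_cons_cons] at hch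
    have h1 : iccPsi hk P Q y = iccPsi hk P Q x :=
      iccPsi_step hICC hk hch.1 (hni x (by simp))
    have ih := iccPsi_chain hICC hk (y :: r) hch.2
      (fun z hz => hni z (List.mem_cons_of_mem _ hz)) y b rfl
      (by rw [← List.getLast?_cons_cons]; exact hb)
    rw [← ha, ← h1, ih]

end ICCAux

/-- Last element of an append. -/
lemma getLast?_append_of_some {l1 l2 : List V} {g : V} (h : l2.getLast? = some g) :
    (l1 ++ l2).getLast? = some g := by
  rw [List.getLast?_append, h]; rfl

/-- An ICC digraph has no I-cycle: no directed cycle contains exactly one vertex of the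
inner vertex set `V_I = {lastv i : i}` (the last vertices of the `k` disjoint paths). -/
theorem stmt9 (D : Digr V) (k : ℕ) (P : Fin k → List V)
    (Q : Fin k → Fin k → List V) (tgt : Fin k → Fin k → V)
    (firstv lastv : Fin k → V)
    (hICC : IsICC D k P Q tgt firstv lastv)
    (c : List V) (hc : D.IsCycle c) :
    (c.toFinset ∩ Finset.univ.image lastv).card ≠ 1 := by
  intro hcard
  obtain ⟨hpath, a, b, hha, hhb, hba⟩ := hc
  obtain ⟨hne, hnd, hvm, hch⟩ := hpath
  have hk : 0 < k := lt_of_lt_of_le (by norm_num) hICC.two_le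
  obtain ⟨v, hv⟩ := Finset.card_eq_one.mp hcard
  have hvmem : v ∈ c.toFinset ∩ Finset.univ.image lastv := by
    rw [hv]; exact Finset.mem_singleton_self v
  rw [Finset.mem_inter, List.mem_toFinset, Finset.mem_image] at hvmem
  obtain ⟨hvc, i, -, hi⟩ := hvmem
  have huniq : ∀ w ∈ c, ∀ m : Fin k, w = lastv m → w = v := by
    intro w hw m hm
    have hw2 : w ∈ c.toFinset ∩ Finset.univ.image lastv :=
      Finset.mem_inter.mpr ⟨List.mem_toFinset.mpr hw,
        Finset.mem_image.mpr ⟨m, Finset.mem_univ m, hm.symm⟩⟩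
    rw [hv, Finset.mem_singleton] at hw2
    exact hw2
  obtain ⟨l1, l2, rfl⟩ := List.append_of_mem hvc
  have hdisj := List.disjoint_of_nodup_append hnd
  have hvl1 : v ∉ l1 := fun h => hdisj h List.mem_cons_self
  have hvl2 : v ∉ l2 := (List.nodup_cons.mp (List.nodup_append'.mp hnd).2.1).1
  have hni1 : ∀ x ∈ l1, ∀ m, x ≠ lastv m := by
    intro x hx m hm
    have hxv := huniq x (by simp [hx]) m hm
    exact hvl1 (hxv ▸ hx)
  have hni2 : ∀ x ∈ l2, ∀ m, x ≠ lastv m := by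
    intro x hx m hm
    have hxv := huniq x (by simp [hx]) m hm
    exact hvl2 (hxv ▸ hx)
  unfold List.Chain' at hch; rw [List.isChain_append] at hch
  obtain ⟨hch1, hch2, hjun⟩ := hch
  have psi_v : iccPsi hk P Q v = i := by rw [← hi]; exact iccPsi_lastv hICC hk i
  -- step 1: show `iccPsi a ≠ i`
  have hpa : iccPsi hk P Q a ≠ i := by
    cases l2 with
    | nil =>
      -- b = v and the closing arc leaves v
      have hbv : b = v := by
        have h2 : (l1 ++ [v]).getLast? = some v := List.getLast?_concat
        rw [hhb] at h2
        exact Option.some_inj.mp h2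
      subst hbv
      rw [← hi] at hba
      exact iccPsi_out hICC hk hba
    | cons y l2' =>
      rw [List.isChain_cons] at hch2
      obtain ⟨hvarc, hch2'⟩ := hch2
      have hvy : (v, y) ∈ D.arcs := hvarc y rfl
      rw [← hi] at hvy
      have hpy : iccPsi hk P Q y ≠ i := iccPsi_out hICC hk hvy
      obtain ⟨gl2, hgl2⟩ : ∃ g, (y :: l2').getLast? = some g :=
        Option.isSome_iff_exists.mp (List.getLast?_isSome.mpr (by simp))
      have hgl2mem : gl2 ∈ y :: l2' := List.mem_of_mem_getLast? hgl2
      have hbgl : b = gl2 := by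
        have h2 : (l1 ++ v :: y :: l2').getLast? = some gl2 :=
          getLast?_append_of_some (by rw [← hgl2, List.getLast?_cons_cons])
        rw [hhb] at h2
        exact Option.some_inj.mp h2
      have hc1 : iccPsi hk P Q y = iccPsi hk P Q gl2 :=
        iccPsi_chain hICC hk (y :: l2') hch2' hni2 y gl2 rfl hgl2
      have hc2 : iccPsi hk P Q a = iccPsi hk P Q gl2 :=
        iccPsi_step hICC hk (hbgl ▸ hba) (hni2 gl2 hgl2mem)
      rw [hc2, ← hc1]
      exact hpy
  -- step 2: derive a contradiction using `iccPsi v = i`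
  cases l1 with
  | nil =>
    have hav : a = v := by
      rw [List.nil_append, List.head?_cons] at hha
      exact (Option.some_inj.mp hha).symm
    rw [hav, psi_v] at hpa
    exact hpa rfl
  | cons x l1' =>
    have hax : a = x := by
      rw [List.cons_append, List.head?_cons] at hha
      exact (Option.some_inj.mp hha).symm
    obtain ⟨gl1, hgl1⟩ : ∃ g, (x :: l1').getLast? = some g :=
      Option.isSome_iff_exists.mp (List.getLast?_isSome.mpr (by simp))
    have hgl1mem : gl1 ∈ x :: l1' := List.mem_of_mem_getLast? hgl1
    have harc : (gl1, v) ∈ D.arcs := hjun gl1 hgl1 v rfl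
    have hc1 : iccPsi hk P Q a = iccPsi hk P Q gl1 :=
      iccPsi_chain hICC hk (x :: l1') hch1 hni1 a gl1 (by rw [hax]; rfl) hgl1
    have hc2 : iccPsi hk P Q v = iccPsi hk P Q gl1 :=
      iccPsi_step hICC hk harc (hni1 gl1 hgl1mem)
    rw [psi_v] at hc2
    rw [hc1, ← hc2] at hpa
    exact hpa rfl
end

section
/- Let D be an ICC digraph with inner vertex set V_I = {v^1_{n_1}, …, v^k_{n_k}} (the last vertices of the k disjoint paths). Then for every ordered pair (i, j) of distinct inner vertices there is exactly one P-path from i to j in D, where a P-path is a directed path whose first and last vertices are two distinct vertices of V_I and all of whose other vertices lie outside V_I. -/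
open Finset

variable {V : Type} [DecidableEq V]

namespace ICCAux

variable {V : Type} [DecidableEq V]

set_option linter.unusedSectionVars false

lemma zt_fst_mem : ∀ {l : List V} {u w : V}, (u, w) ∈ l.zip l.tail → u ∈ l.dropLast := by
  intro l
  induction l with
  | nil => intro u w h; simp at h
  | cons a t ih =>
    intro u w h
    cases t with
    | nil => simp at h
    | cons b s =>
      rw [List.tail_cons, List.zip_cons_cons, List.mem_cons] at h
      rcases h with h | h
      · simp only [Prod.mk.injEq] at h
        obtain ⟨rfl, rfl⟩ := h
        simp [List.dropLast_cons₂]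
      · have hu : u ∈ (b :: s).dropLast := ih (by simpa using h)
        rw [List.dropLast_cons₂]
        exact List.mem_cons_of_mem _ hu

lemma zt_next : ∀ {l : List V}, l.Nodup → ∀ {u w w' : V},
    (u, w) ∈ l.zip l.tail → (u, w') ∈ l.zip l.tail → w = w' := by
  intro l
  induction l with
  | nil => intro _ u w w' h; simp at h
  | cons a t ih =>
    intro hnd u w w' h h'
    cases t with
    | nil => simp at h
    | cons b s =>
      rw [List.tail_cons, List.zip_cons_cons, List.mem_cons] at h h'
      have hna : a ∉ (b :: s) := by
        intro hb; exact (List.nodup_cons.mp hnd).1 hb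
      rcases h with h | h <;> rcases h' with h' | h'
      · simp only [Prod.mk.injEq] at h h'
        rw [h.2, h'.2]
      · simp only [Prod.mk.injEq] at h
        obtain ⟨rfl, rfl⟩ := h
        exact absurd ((List.dropLast_sublist _).subset (zt_fst_mem (by simpa using h'))) hna
      · simp only [Prod.mk.injEq] at h'
        obtain ⟨rfl, rfl⟩ := h'
        exact absurd ((List.dropLast_sublist _).subset (zt_fst_mem (by simpa using h))) hna
      · exact ih (List.nodup_cons.mp hnd).2 (by simpa using h) (by simpa using h')

lemma zt_head {a : V} {rest : List V} (hnd : (a :: rest).Nodup) {w : V}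
    (h : (a, w) ∈ (a :: rest).zip (a :: rest).tail) : rest.head? = some w := by
  cases rest with
  | nil => simp at h
  | cons b s =>
    have hb : (a, b) ∈ (a :: b :: s).zip (a :: b :: s).tail := by
      rw [List.tail_cons, List.zip_cons_cons]; exact List.mem_cons_self
    rw [List.head?_cons, zt_next hnd hb h]

lemma getLast?_mem {l : List V} {a : V} (h : l.getLast? = some a) : a ∈ l := by
  have := List.dropLast_append_getLast? a h
  rw [← this]; simp

lemma getLast_not_mem_dropLast {l : List V} (hnd : l.Nodup) {a : V}
    (h : l.getLast? = some a) : a ∉ l.dropLast := by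
  intro ha
  have heq := List.dropLast_append_getLast? a h
  rw [← heq, List.nodup_append] at hnd
  exact hnd.2.2 a ha a (by simp) rfl

lemma forced_unique (A : Finset (V × V)) (VI : Finset V)
    (huniq : ∀ v w w' : V, v ∉ VI → (v, w) ∈ A → (v, w') ∈ A → w = w') :
    ∀ r r' : List V, r ≠ [] → r' ≠ [] → r.head? = r'.head? →
      r.Chain' (fun u w => (u, w) ∈ A) → r'.Chain' (fun u w => (u, w) ∈ A) →
      (∀ v ∈ r.dropLast, v ∉ VI) → (∀ v ∈ r'.dropLast, v ∉ VI) →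
      (∀ c, r.getLast? = some c → c ∈ VI) → (∀ c, r'.getLast? = some c → c ∈ VI) →
      r = r' := by
  intro r
  induction r with
  | nil => intro r' h; exact absurd rfl h
  | cons b s ih =>
    intro r' _ hr' hhead hc hc' hdl hdl' hlast hlast'
    cases r' with
    | nil => exact absurd rfl hr'
    | cons b' s' =>
      simp only [List.head?_cons, Option.some.injEq] at hhead
      subst hhead
      cases s with
      | nil =>
        have hbVI : b ∈ VI := hlast b rfl
        cases s' with
        | nil => rfl
        | cons c' t' =>
          exact absurd hbVI (hdl' b (by rw [List.dropLast_cons₂]; exact List.mem_cons_self))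
      | cons c t =>
        cases s' with
        | nil =>
          exact absurd (hlast' b rfl)
            (hdl b (by rw [List.dropLast_cons₂]; exact List.mem_cons_self))
        | cons c' t' =>
          have hbVI : b ∉ VI := hdl b (by rw [List.dropLast_cons₂]; exact List.mem_cons_self)
          unfold List.Chain' at hc hc'
          rw [List.isChain_cons_cons] at hc hc'
          have hcc : c = c' := huniq b c c' hbVI hc.1 hc'.1
          subst hcc
          have hrec : (c :: t) = (c :: t') := ih (c :: t') (by simp) (by simp) rfl hc.2 hc'.2
            (fun v hv => hdl v (by rw [List.dropLast_cons₂]; exact List.mem_cons_of_mem _ hv))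
            (fun v hv => hdl' v (by rw [List.dropLast_cons₂]; exact List.mem_cons_of_mem _ hv))
            (fun cc hcc => hlast cc (by rwa [List.getLast?_cons_cons]))
            (fun cc hcc => hlast' cc (by rwa [List.getLast?_cons_cons]))
          rw [hrec]

end ICCAux

/-- In an ICC digraph, for every ordered pair of distinct inner vertices (the last vertices
of the `k` disjoint paths) there is exactly one P-path from the first to the second. -/
theorem stmt10 (D : Digr V) (k : ℕ) (P : Fin k → List V)
    (Q : Fin k → Fin k → List V) (tgt : Fin k → Fin k → V)
    (firstv lastv : Fin k → V)
    (hICC : IsICC D k P Q tgt firstv lastv)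
    (i j : Fin k) (hij : i ≠ j) :
    ∃! p : List V,
      D.IsPPathFromTo (Finset.univ.image lastv) (lastv i) (lastv j) p := by
  classical
  obtain ⟨hk, hhead_eq, hlast_eq, hpath_P, hdisj_P, hconn, htgt_mem, hdisj_QP, hdisj_QQ,
    hverts, harcs, hindeg⟩ := hICC
  set VI := Finset.univ.image lastv with hVIdef
  have hlmem : ∀ m, lastv m ∈ P m := fun m => ICCAux.getLast?_mem (hlast_eq m)
  have hlinj : ∀ m m', lastv m = lastv m' → m = m' := by
    intro m m' h
    by_contra hne
    exact hdisj_P m m' hne (lastv m) (hlmem m) (h ▸ hlmem m')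
  have hVImem : ∀ m, lastv m ∈ VI := fun m => Finset.mem_image_of_mem _ (Finset.mem_univ m)
  have hVIcases : ∀ v ∈ VI, ∃ m, v = lastv m := by
    intro v hv
    rw [hVIdef, Finset.mem_image] at hv
    obtain ⟨m, -, hm⟩ := hv
    exact ⟨m, hm.symm⟩
  have harcmem : ∀ u w : V, (u, w) ∈ D.arcs ↔
      (∃ m, (u, w) ∈ (P m).zip (P m).tail) ∨
      (∃ m m', m ≠ m' ∧ (u, w) ∈ (lastv m :: (Q m m' ++ [tgt m m'])).zip
        (lastv m :: (Q m m' ++ [tgt m m'])).tail) := by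
    intro u w
    rw [harcs]
    simp only [Finset.mem_union, Finset.mem_biUnion, Finset.mem_univ, true_and]
    constructor
    · rintro (⟨m, hm⟩ | ⟨⟨m, m'⟩, hm⟩)
      · exact Or.inl ⟨m, by simpa [listArcs] using hm⟩
      · split_ifs at hm with hne
        · exact Or.inr ⟨m, m', hne, by simpa [listArcs] using hm⟩
        · simp at hm
    · rintro (⟨m, hm⟩ | ⟨m, m', hne, hm⟩)
      · exact Or.inl ⟨m, by simpa [listArcs] using hm⟩
      · refine Or.inr ⟨(m, m'), ?_⟩
        have hne' : ((m, m').1 ≠ (m, m').2) := hne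
        rw [if_pos hne']
        simpa [listArcs] using hm
  have hconnsrc : ∀ m m' (x v : V), m ≠ m' → v ∉ VI →
      (v, x) ∈ (lastv m :: (Q m m' ++ [tgt m m'])).zip
        (lastv m :: (Q m m' ++ [tgt m m'])).tail →
      v ∈ Q m m' := by
    intro m m' x v hne hv hx
    have hd := ICCAux.zt_fst_mem hx
    rw [show (lastv m :: (Q m m' ++ [tgt m m'])) = ((lastv m :: Q m m') ++ [tgt m m']) by simp,
      List.dropLast_concat] at hd
    rcases List.mem_cons.mp hd with hvl | hd
    · rw [hvl] at hv
      exact absurd (hVImem m) hv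
    · exact hd
  have huniq : ∀ v w w' : V, v ∉ VI → (v, w) ∈ D.arcs → (v, w') ∈ D.arcs → w = w' := by
    intro v w w' hv h h'
    rw [harcmem] at h h'
    rcases h with ⟨m, hm⟩ | ⟨m, m', hne, hm⟩ <;>
      rcases h' with ⟨n, hn⟩ | ⟨n, n', hne', hn⟩
    · have hvm : v ∈ P m := (List.dropLast_sublist _).subset (ICCAux.zt_fst_mem hm)
      have hvn : v ∈ P n := (List.dropLast_sublist _).subset (ICCAux.zt_fst_mem hn)
      have hmn : m = n := by
        by_contra hx
        exact hdisj_P m n hx v hvm hvn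
      subst hmn
      exact ICCAux.zt_next (hpath_P m).2.1 hm hn
    · have hvm : v ∈ P m := (List.dropLast_sublist _).subset (ICCAux.zt_fst_mem hm)
      exact absurd hvm (hdisj_QP n n' hne' v (hconnsrc n n' w' v hne' hv hn) m)
    · have hvn : v ∈ P n := (List.dropLast_sublist _).subset (ICCAux.zt_fst_mem hn)
      exact absurd hvn (hdisj_QP m m' hne v (hconnsrc m m' w v hne hv hm) n)
    · have hQ1 := hconnsrc m m' w v hne hv hm
      have hQ2 := hconnsrc n n' w' v hne' hv hn
      have hpq : (m, m') = (n, n') := by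
        by_contra hp
        exact hdisj_QQ m m' n n' hne hne' hp v hQ1 hQ2
      rw [Prod.mk.injEq] at hpq
      obtain ⟨rfl, rfl⟩ := hpq
      exact ICCAux.zt_next (hconn m m' hne).2.1 hm hn
  have hstart : ∀ w : V, (lastv i, w) ∈ D.arcs →
      ∃ m', i ≠ m' ∧ (Q i m' ++ [tgt i m']).head? = some w := by
    intro w h
    rw [harcmem] at h
    rcases h with ⟨n, hn⟩ | ⟨n, n', hne, hn⟩
    · have hvd := ICCAux.zt_fst_mem hn
      have hvp : lastv i ∈ P n := (List.dropLast_sublist _).subset hvd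
      have hmn : i = n := by
        by_contra hmn
        exact hdisj_P i n hmn _ (hlmem i) hvp
      subst hmn
      exact absurd hvd (ICCAux.getLast_not_mem_dropLast (hpath_P i).2.1 (hlast_eq i))
    · have hd := ICCAux.zt_fst_mem hn
      rw [show (lastv n :: (Q n n' ++ [tgt n n'])) = ((lastv n :: Q n n') ++ [tgt n n']) by simp,
        List.dropLast_concat] at hd
      rcases List.mem_cons.mp hd with hvl | hd
      · have hin : i = n := hlinj i n hvl
        subst hin
        exact ⟨n', hne, ICCAux.zt_head (hconn i n' hne).2.1 hn⟩
      · exact absurd (hlmem i) (hdisj_QP n n' hne _ hd i)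
  have hcanon : ∀ m, i ≠ m → ∃ t : List V,
      t ≠ [] ∧
      t.head? = (Q i m ++ [tgt i m]).head? ∧
      (lastv i :: t).Chain' (fun u w => (u, w) ∈ D.arcs) ∧
      t.getLast? = some (lastv m) ∧
      (∀ v ∈ t.dropLast, v ∉ VI) ∧
      (lastv i :: t).Nodup ∧
      (∀ v ∈ lastv i :: t, v ∈ D.verts) := by
    intro m hne
    have htgt := htgt_mem i m hne
    have hn0lt : (P m).idxOf (tgt i m) < (P m).length := List.idxOf_lt_length_iff.2 htgt
    refine ⟨Q i m ++ (P m).drop ((P m).idxOf (tgt i m)), ?_⟩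
    set sfx := (P m).drop ((P m).idxOf (tgt i m)) with hsfxdef
    have hsfx_ne : sfx ≠ [] := by
      have h1 : 0 < sfx.length := by rw [hsfxdef, List.length_drop]; omega
      exact List.ne_nil_of_length_pos h1
    have hsfx_head : sfx.head? = some (tgt i m) := by
      rw [hsfxdef, List.head?_drop, List.getElem?_eq_getElem hn0lt, List.getElem_idxOf hn0lt]
    have hsfx_last : sfx.getLast? = some (lastv m) := by
      have h2 : (P m).take ((P m).idxOf (tgt i m)) ++ sfx = P m := by
        rw [hsfxdef]; exact List.take_append_drop _ _
      calc sfx.getLast? = (((P m).take ((P m).idxOf (tgt i m))) ++ sfx).getLast? :=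
            (List.getLast?_append_of_ne_nil _ hsfx_ne).symm
        _ = some (lastv m) := by rw [h2]; exact hlast_eq m
    have hsfx_sub : ∀ v ∈ sfx, v ∈ P m := by
      intro v hv; rw [hsfxdef] at hv; exact (List.drop_sublist _ _).subset hv
    have hsfx_nd : sfx.Nodup := by
      rw [hsfxdef]; exact (hpath_P m).2.1.sublist (List.drop_sublist _ _)
    have hsfx_chain : sfx.Chain' (fun u w => (u, w) ∈ D.arcs) := by
      rw [hsfxdef]; exact (hpath_P m).2.2.2.drop _
    have hcc := (hconn i m hne).2.2.2
    unfold List.Chain' at hcc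
    rw [show (lastv i :: (Q i m ++ [tgt i m])) = ((lastv i :: Q i m) ++ [tgt i m]) by simp,
      List.isChain_append] at hcc
    obtain ⟨hc1, -, hlink⟩ := hcc
    have hchain_full : (lastv i :: (Q i m ++ sfx)).Chain' (fun u w => (u, w) ∈ D.arcs) := by
      unfold List.Chain'
      rw [show (lastv i :: (Q i m ++ sfx)) = ((lastv i :: Q i m) ++ sfx) by simp,
        List.isChain_append]
      refine ⟨hc1, hsfx_chain, ?_⟩
      intro x hx y hy
      rw [hsfx_head, Option.mem_some_iff] at hy
      subst hy
      exact hlink x hx _ (by simp)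
    refine ⟨?_, ?_, hchain_full, ?_, ?_, ?_, ?_⟩
    · intro h0; exact hsfx_ne (List.append_eq_nil_iff.mp h0).2
    · cases hQ : Q i m with
      | nil => simp only [hQ, List.nil_append]; rw [hsfx_head]; simp
      | cons a l => simp [hQ]
    · rw [List.getLast?_append_of_ne_nil _ hsfx_ne]; exact hsfx_last
    · rw [List.dropLast_append_of_ne_nil hsfx_ne]
      intro v hv hvVI
      obtain ⟨m', hm'⟩ := hVIcases v hvVI
      rcases List.mem_append.mp hv with hvQ | hvd
      · rw [hm'] at hvQ
        exact hdisj_QP i m hne _ hvQ m' (hlmem m')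
      · have hvP : v ∈ P m := hsfx_sub v ((List.dropLast_sublist _).subset hvd)
        have hmm : m' = m := by
          by_contra hx
          exact hdisj_P m' m hx v (by rw [hm']; exact hlmem m') hvP
        rw [hm', hmm] at hvd
        exact ICCAux.getLast_not_mem_dropLast hsfx_nd hsfx_last hvd
    · rw [show (lastv i :: (Q i m ++ sfx)) = ((lastv i :: Q i m) ++ sfx) by simp,
        List.nodup_append]
      refine ⟨?_, hsfx_nd, ?_⟩
      · have hnd := (hconn i m hne).2.1
        rw [show (lastv i :: (Q i m ++ [tgt i m])) = ((lastv i :: Q i m) ++ [tgt i m]) by simp]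
          at hnd
        exact hnd.sublist (List.sublist_append_left _ _)
      · intro a ha _ ha' rfl
        have haP : a ∈ P m := hsfx_sub a ha'
        rcases List.mem_cons.mp ha with rfl | haQ
        · exact hdisj_P i m hne _ (hlmem i) haP
        · exact hdisj_QP i m hne a haQ m haP
    · intro v hv
      rcases List.mem_cons.mp hv with rfl | hv'
      · exact (hconn i m hne).2.2.1 _ (List.mem_cons_self)
      · rcases List.mem_append.mp hv' with hvQ | hvs
        · exact (hconn i m hne).2.2.1 v (by simp [hvQ])
        · exact (hpath_P m).2.2.1 v (hsfx_sub v hvs)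
  obtain ⟨tj, htj_ne, htj_head, htj_chain, htj_last, htj_dl, htj_nd, htj_verts⟩ := hcanon j hij
  have hlast_cons : ∀ t : List V, t ≠ [] → (lastv i :: t).getLast? = t.getLast? := by
    intro t ht
    rw [show (lastv i :: t) = [lastv i] ++ t by simp, List.getLast?_append_of_ne_nil _ ht]
  refine ⟨lastv i :: tj,
    ⟨⟨by simp, htj_nd, htj_verts, htj_chain⟩, by simp, ?_, hVImem i, hVImem j, ?_, ?_⟩, ?_⟩
  · rw [hlast_cons tj htj_ne]; exact htj_last
  · intro h; exact hij (hlinj i j h)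
  · intro v hv
    exact htj_dl v (by simpa using hv)
  · intro q hq
    obtain ⟨⟨hq_ne, hq_nd, hq_verts, hq_chain⟩, hq_head, hq_last, -, -, -, hq_int⟩ := hq
    cases q with
    | nil => simp at hq_head
    | cons a r =>
      rw [List.head?_cons, Option.some.injEq] at hq_head
      subst hq_head
      cases r with
      | nil =>
        simp only [List.getLast?_singleton, Option.some.injEq] at hq_last
        exact absurd (hlinj _ _ hq_last) hij
      | cons b s =>
        unfold List.Chain' at hq_chain
        rw [List.isChain_cons_cons] at hq_chain
        obtain ⟨harc0, hr_chain⟩ := hq_chain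
        obtain ⟨m, hmne, hm_head⟩ := hstart b harc0
        obtain ⟨tm, htm_ne, htm_head, htm_chain, htm_last, htm_dl, -, -⟩ := hcanon m hmne
        have hr_last : (b :: s).getLast? = some (lastv j) := by
          rw [hlast_cons (b :: s) (by simp)] at hq_last
          exact hq_last
        have hr_dl : ∀ v ∈ (b :: s).dropLast, v ∉ VI := by
          intro v hv
          exact hq_int v (by simpa using hv)
        have hrVI : ∀ c, (b :: s).getLast? = some c → c ∈ VI := by
          intro c hc
          rw [hr_last, Option.some.injEq] at hc
          exact hc ▸ hVImem j
        have htmVI : ∀ c, tm.getLast? = some c → c ∈ VI := by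
          intro c hc
          rw [htm_last, Option.some.injEq] at hc
          exact hc ▸ hVImem m
        have hreq : (b :: s) = tm := ICCAux.forced_unique D.arcs VI huniq (b :: s) tm
          (by simp) htm_ne (by rw [List.head?_cons, htm_head, hm_head]) hr_chain
          htm_chain.tail hr_dl htm_dl hrVI htmVI
        have hmj : m = j := hlinj m j (by
          have h1 := hr_last
          rw [hreq, htm_last, Option.some.injEq] at h1
          exact h1)
        subst hmj
        have hteq : tm = tj := ICCAux.forced_unique D.arcs VI huniq tm tj htm_ne htj_ne
          (by rw [htm_head, htj_head]) htm_chain.tail htj_chain.tail htm_dl htj_dl htmVI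
          (fun c hc => by rw [htj_last, Option.some.injEq] at hc; exact hc ▸ hVImem m)
        rw [hreq, hteq]
end

section
/- (Theorem 2) Every ICC digraph D is a k-GIC digraph with inner vertex set V_I = {v^1_{n_1}, …, v^k_{n_k}} (the last vertices of the k disjoint paths): there exist out-arborescences T_i ⊆ D rooted at each i ∈ V_I with leaf set exactly V_I \ {i} whose union is D, D contains no I-cycle, and for every ordered pair of distinct inner vertices there is exactly one P-path between them. -/
open Finset

variable {V : Type} [DecidableEq V]

set_option linter.unusedSectionVars false
set_option linter.unusedVariables false


namespace LA

theorem listArcs_nil : listArcs ([] : List V) = ∅ := rfl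
theorem listArcs_single (a : V) : listArcs [a] = ∅ := rfl

theorem listArcs_cons_cons (a b : V) (l : List V) :
    listArcs (a :: b :: l) = insert (a, b) (listArcs (b :: l)) := by
  simp [listArcs]

theorem mem_listArcs_cons {a x y : V} {l : List V} :
    (x, y) ∈ listArcs (a :: l) ↔ (x = a ∧ l.head? = some y) ∨ (x, y) ∈ listArcs l := by
  cases l with
  | nil => simp [listArcs_single, listArcs_nil]
  | cons b t =>
    rw [listArcs_cons_cons, Finset.mem_insert]
    simp [Prod.ext_iff, eq_comm]

theorem fst_mem_dropLast {x y : V} {l : List V} (h : (x, y) ∈ listArcs l) :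
    x ∈ l.dropLast := by
  induction l with
  | nil => simp [listArcs_nil] at h
  | cons a t ih =>
    rcases mem_listArcs_cons.1 h with ⟨rfl, hh⟩ | h
    · cases t with
      | nil => simp at hh
      | cons b s => simp
    · cases t with
      | nil => simp [listArcs_nil] at h
      | cons b s =>
        have := ih h
        simp only [List.dropLast_cons_of_ne_nil (l := b :: s) (by simp)]
        exact List.mem_cons_of_mem _ this

theorem snd_mem_tail {x y : V} {l : List V} (h : (x, y) ∈ listArcs l) :
    y ∈ l.tail := by
  induction l with
  | nil => simp [listArcs_nil] at h
  | cons a t ih =>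
    rcases mem_listArcs_cons.1 h with ⟨rfl, hh⟩ | h
    · simpa using List.mem_of_mem_head? hh
    · cases t with
      | nil => simp [listArcs_nil] at h
      | cons b s => exact List.mem_cons_of_mem _ (ih h)

theorem fst_mem {x y : V} {l : List V} (h : (x, y) ∈ listArcs l) : x ∈ l :=
  List.dropLast_sublist l |>.mem (fst_mem_dropLast h)

theorem snd_mem {x y : V} {l : List V} (h : (x, y) ∈ listArcs l) : y ∈ l :=
  List.tail_sublist l |>.mem (snd_mem_tail h)

theorem exists_arc_of_mem_dropLast {x : V} {l : List V} (h : x ∈ l.dropLast) :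
    ∃ y, (x, y) ∈ listArcs l := by
  induction l with
  | nil => simp at h
  | cons a t ih =>
    cases t with
    | nil => simp at h
    | cons b s =>
      rw [List.dropLast_cons_of_ne_nil (by simp), List.mem_cons] at h
      rcases h with rfl | h
      · exact ⟨b, mem_listArcs_cons.2 (Or.inl ⟨rfl, rfl⟩)⟩
      · obtain ⟨y, hy⟩ := ih h
        exact ⟨y, mem_listArcs_cons.2 (Or.inr hy)⟩

theorem chain'_self (l : List V) : l.Chain' (fun u w => (u, w) ∈ listArcs l) := by
  induction l with
  | nil => exact List.isChain_nil
  | cons a t ih =>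
    cases t with
    | nil => exact List.isChain_singleton _
    | cons b s =>
      refine List.isChain_cons_cons.2 ⟨mem_listArcs_cons.2 (Or.inl ⟨rfl, rfl⟩), ?_⟩
      exact ih.imp fun a b h => mem_listArcs_cons.2 (Or.inr h)

theorem chain'_of_subset {l : List V} {A : Finset (V × V)} (h : listArcs l ⊆ A) :
    l.Chain' (fun u w => (u, w) ∈ A) :=
  (chain'_self l).imp fun a b hb => h hb

theorem listArcs_subset_cons (a : V) (l : List V) : listArcs l ⊆ listArcs (a :: l) := by
  intro p hp
  obtain ⟨x, y⟩ := p
  exact mem_listArcs_cons.2 (Or.inr hp)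

theorem listArcs_append_left (l r : List V) : listArcs l ⊆ listArcs (l ++ r) := by
  induction l with
  | nil => simp [listArcs_nil]
  | cons a t ih =>
    intro p hp
    obtain ⟨x, y⟩ := p
    rcases mem_listArcs_cons.1 hp with ⟨rfl, hh⟩ | hp'
    · refine mem_listArcs_cons.2 (Or.inl ⟨rfl, ?_⟩)
      cases t with
      | nil => simp at hh
      | cons b s => simpa using hh
    · exact (List.cons_append (a := a) (as := t) (bs := r)) ▸ mem_listArcs_cons.2 (Or.inr (ih hp'))

theorem listArcs_append_right (l r : List V) : listArcs r ⊆ listArcs (l ++ r) := by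
  induction l with
  | nil => simp
  | cons a t ih => exact ih.trans (listArcs_subset_cons _ _)

theorem listArcs_suffix {l L : List V} (h : l <:+ L) : listArcs l ⊆ listArcs L := by
  obtain ⟨pre, rfl⟩ := h; exact listArcs_append_right _ _

theorem listArcs_prefix {l L : List V} (h : l <+: L) : listArcs l ⊆ listArcs L := by
  obtain ⟨r, rfl⟩ := h; exact listArcs_append_left _ _

theorem link_mem_append {l r : List V} {x y : V} (hx : l.getLast? = some x)
    (hy : r.head? = some y) : (x, y) ∈ listArcs (l ++ r) := by
  induction l with
  | nil => simp at hx
  | cons a t ih =>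
    cases t with
    | nil =>
      simp at hx; subst hx
      cases r with
      | nil => simp at hy
      | cons b s => simp at hy; subst hy; exact mem_listArcs_cons.2 (Or.inl ⟨rfl, rfl⟩)
    | cons b s =>
      rw [List.getLast?_cons_cons] at hx
      exact (List.cons_append (a := a) (as := b :: s) (bs := r)) ▸ mem_listArcs_cons.2 (Or.inr (ih hx))

theorem mem_listArcs_append {l r : List V} {x y : V} (h : (x, y) ∈ listArcs (l ++ r)) :
    (x, y) ∈ listArcs l ∨ (x, y) ∈ listArcs r ∨ (l.getLast? = some x ∧ r.head? = some y) := by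
  induction l with
  | nil => exact Or.inr (Or.inl (by simpa using h))
  | cons a t ih =>
    rw [List.cons_append, mem_listArcs_cons] at h
    rcases h with ⟨rfl, hh⟩ | h
    · cases t with
      | nil =>
        cases r with
        | nil => simp at hh
        | cons b s => exact Or.inr (Or.inr ⟨by simp, by simpa using hh⟩)
      | cons b s => exact Or.inl (mem_listArcs_cons.2 (Or.inl ⟨rfl, by simpa using hh⟩))
    · rcases ih h with h | h | ⟨h1, h2⟩
      · exact Or.inl (listArcs_subset_cons _ _ h)
      · exact Or.inr (Or.inl h)
      · cases t with
        | nil => simp at h1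
        | cons b s => exact Or.inr (Or.inr ⟨by rw [List.getLast?_cons_cons]; exact h1, h2⟩)

end LA

namespace LA


theorem mem_of_getLast' {l : List V} {x : V} (h : l.getLast? = some x) : x ∈ l := by
  obtain ⟨hne, rfl⟩ := List.mem_getLast?_eq_getLast h
  exact List.getLast_mem hne

theorem succ_unique {l : List V} (hl : l.Nodup) {x y z : V}
    (hy : (x, y) ∈ listArcs l) (hz : (x, z) ∈ listArcs l) : y = z := by
  induction l with
  | nil => simp [listArcs_nil] at hy
  | cons a t ih =>
    rcases mem_listArcs_cons.1 hy with ⟨rfl, hh⟩ | hy'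
    · rcases mem_listArcs_cons.1 hz with ⟨-, hh'⟩ | hz'
      · rw [hh] at hh'; exact Option.some_inj.1 hh'
      · exact absurd (fst_mem hz') (List.nodup_cons.1 hl).1
    · rcases mem_listArcs_cons.1 hz with ⟨rfl, -⟩ | hz'
      · exact absurd (fst_mem hy') (List.nodup_cons.1 hl).1
      · exact ih (List.nodup_cons.1 hl).2 hy' hz'

theorem getLast_not_mem_dropLast {l : List V} (hl : l.Nodup) {x : V}
    (hx : l.getLast? = some x) : x ∉ l.dropLast := by
  intro hmem
  cases l with
  | nil => simp at hx
  | cons a t =>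
    have h1 : (a :: t) = (a :: t).dropLast ++ [(a :: t).getLast (by simp)] :=
      (List.dropLast_append_getLast (by simp)).symm
    have hx' : (a :: t).getLast (by simp) = x := by
      rwa [List.getLast?_eq_getLast (l := a :: t) (by simp), Option.some_inj] at hx
    rw [h1] at hl
    have := (List.nodup_append.1 hl).2.2
    exact this x hmem _ (by simp) hx'.symm

theorem no_arc_from_getLast {l : List V} (hl : l.Nodup) {x y : V}
    (hx : l.getLast? = some x) (h : (x, y) ∈ listArcs l) : False :=
  getLast_not_mem_dropLast hl hx (fst_mem_dropLast h)

theorem mem_dropLast_or_getLast {l : List V} {x : V} (h : x ∈ l) :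
    x ∈ l.dropLast ∨ l.getLast? = some x := by
  induction l with
  | nil => simp at h
  | cons a t ih =>
    cases t with
    | nil => simp at h; simp [h]
    | cons b s =>
      rcases List.mem_cons.1 h with rfl | h
      · exact Or.inl (by simp)
      · rcases ih h with h | h
        · exact Or.inl (by rw [List.dropLast_cons_of_ne_nil (by simp)]; exact List.mem_cons_of_mem _ h)
        · exact Or.inr (by rwa [List.getLast?_cons_cons])

theorem head_not_mem_tail {l : List V} (hl : l.Nodup) {x : V} (hx : l.head? = some x) :
    x ∉ l.tail := by
  cases l with
  | nil => simp at hx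
  | cons a t => simp at hx; subst hx; exact (List.nodup_cons.1 hl).1

/-- If `l` is a prefix of nodup `L` with the same last element, then `l = L`. -/
theorem prefix_eq_of_getLast {l L : List V} (h : l <+: L) (hL : L.Nodup)
    (hne : l ≠ []) (hlast : l.getLast? = L.getLast?) : l = L := by
  obtain ⟨r, rfl⟩ := h
  cases r with
  | nil => simp
  | cons b s =>
    exfalso
    obtain ⟨x, hx⟩ := List.getLast?_isSome.2 hne |> Option.isSome_iff_exists.1
    have hxl : x ∈ l := mem_of_getLast' hx
    have hxr : x ∈ b :: s := by
      have : (l ++ b :: s).getLast? = (b :: s).getLast? :=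
        List.getLast?_append_of_ne_nil l (by simp)
      rw [← hlast, hx] at this
      exact mem_of_getLast' this.symm
    exact (List.nodup_append.1 hL).2.2 x hxl x hxr rfl

theorem eq_of_prefix_prefix_getLast {p q L : List V} (hp : p <+: L) (hq : q <+: L)
    (hL : L.Nodup) (hpne : p ≠ []) (hqne : q ≠ []) (hlast : p.getLast? = q.getLast?) :
    p = q := by
  rcases List.prefix_or_prefix_of_prefix hp hq with h | h
  · exact prefix_eq_of_getLast h (hq.sublist.nodup hL) hpne hlast
  · exact (prefix_eq_of_getLast h (hp.sublist.nodup hL) hqne hlast.symm).symm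

theorem nodup_head_getLast_eq {l : List V} (hl : l.Nodup) {a : V}
    (h1 : l.head? = some a) (h2 : l.getLast? = some a) : l = [a] := by
  cases l with
  | nil => simp at h1
  | cons b t =>
    simp at h1; subst h1
    cases t with
    | nil => rfl
    | cons c s =>
      exfalso
      rw [List.getLast?_cons_cons] at h2
      exact (List.nodup_cons.1 hl).1 (mem_of_getLast' h2)

/-- Forced-walk lemma: if every arc from a non-last vertex of `L` follows `L`, then any
chain starting at `L`'s head is a prefix of `L` or extends `L`. -/
theorem forced_prefix {A : Finset (V × V)} :
    ∀ (p L : List V), L.Nodup →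
    (∀ x y, x ∈ L.dropLast → (x, y) ∈ A → (x, y) ∈ listArcs L) →
    p.Chain' (fun u w => (u, w) ∈ A) → p.head? = L.head? → p ≠ [] →
    p <+: L ∨ L <+: p := by
  intro p
  induction p with
  | nil => intro L _ _ _ _ h; exact absurd rfl h
  | cons a q ih =>
    intro L hL hforce hchain hhead _
    cases L with
    | nil => simp at hhead
    | cons x M =>
      simp at hhead; subst hhead
      cases q with
      | nil => exact Or.inl ⟨M, rfl⟩
      | cons b r =>
        cases M with
        | nil => exact Or.inr ⟨b :: r, rfl⟩
        | cons y M' =>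
          have hab : (a, b) ∈ A := (List.isChain_cons_cons.1 hchain).1
          have hadl : a ∈ (a :: y :: M').dropLast := by
            rw [List.dropLast_cons_of_ne_nil (by simp)]; exact List.mem_cons_self
          have harc : (a, b) ∈ listArcs (a :: y :: M') := hforce a b hadl hab
          have hb : b = y := by
            rcases mem_listArcs_cons.1 harc with ⟨-, hh⟩ | h'
            · simpa using hh.symm
            · exact absurd (fst_mem h') (List.nodup_cons.1 hL).1
          subst hb
          have hforce' : ∀ x y_1, x ∈ (b :: M').dropLast → (x, y_1) ∈ A →
              (x, y_1) ∈ listArcs (b :: M') := by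
            intro x' y' hx' harc'
            have hx'' : x' ∈ (a :: b :: M').dropLast := by
              rw [List.dropLast_cons_of_ne_nil (by simp)]
              exact List.mem_cons_of_mem _ hx'
            have := hforce x' y' hx'' harc'
            rcases mem_listArcs_cons.1 this with ⟨rfl, -⟩ | h'
            · exact absurd (List.dropLast_sublist _ |>.mem hx') (List.nodup_cons.1 hL).1
            · exact h'
          have := ih (b :: M') (List.nodup_cons.1 hL).2 hforce'
            (List.isChain_cons_cons.1 hchain).2 rfl (by simp)
          rcases this with ⟨t, ht⟩ | ⟨t, ht⟩
          · exact Or.inl ⟨t, by rw [List.cons_append, ht]⟩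
          · exact Or.inr ⟨t, by rw [List.cons_append, ht]⟩

/-- With full forcing (including the last vertex of `L`), chains from the head are
prefixes of `L`. -/
theorem forced_prefix_full {A : Finset (V × V)} (p L : List V) (hL : L.Nodup)
    (hforce : ∀ x y, x ∈ L → (x, y) ∈ A → (x, y) ∈ listArcs L)
    (hchain : p.Chain' (fun u w => (u, w) ∈ A)) (hhead : p.head? = L.head?)
    (hpne : p ≠ []) : p <+: L := by
  have h := forced_prefix p L hL
    (fun x y hx h => hforce x y (List.dropLast_sublist _ |>.mem hx) h) hchain hhead hpne
  rcases h with h | h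
  · exact h
  · obtain ⟨r, rfl⟩ := h
    cases r with
    | nil => simp
    | cons c s =>
      exfalso
      have hLne : L ≠ [] := by rintro rfl; simp at hhead
      obtain ⟨x, hx⟩ := Option.isSome_iff_exists.1 (List.getLast?_isSome.2 hLne)
      have harc : (x, c) ∈ A := by
        have := List.isChain_append.1 hchain
        exact this.2.2 x hx c rfl
      exact no_arc_from_getLast hL hx (hforce x c (mem_of_getLast' hx) harc)

end LA


section ICC
open LA List

theorem head?_drop_idxOf {l : List V} {x : V} (h : x ∈ l) :
    (l.drop (l.idxOf x)).head? = some x := by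
  induction l with
  | nil => simp at h
  | cons a t ih =>
    by_cases hx : x = a
    · subst hx; simp [List.idxOf_cons_self]
    · rw [List.idxOf_cons_ne _ (Ne.symm hx)]
      exact ih (by rcases List.mem_cons.1 h with h | h; exact absurd h hx; exact h)

variable {k : ℕ}

def connICC (Q : Fin k → Fin k → List V) (tgt : Fin k → Fin k → V)
    (lastv : Fin k → V) (i j : Fin k) : List V := lastv i :: (Q i j ++ [tgt i j])
def segICC (P : Fin k → List V) (tgt : Fin k → Fin k → V) (i j : Fin k) : List V :=
  (P j).drop ((P j).idxOf (tgt i j))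
def btICC (P : Fin k → List V) (Q : Fin k → Fin k → List V) (tgt : Fin k → Fin k → V)
    (i j : Fin k) : List V := Q i j ++ segICC P tgt i j
def branchICC (P : Fin k → List V) (Q : Fin k → Fin k → List V) (tgt : Fin k → Fin k → V)
    (lastv : Fin k → V) (i j : Fin k) : List V := lastv i :: btICC P Q tgt i j

variable {D : Digr V} {P : Fin k → List V} {Q : Fin k → Fin k → List V}
  {tgt : Fin k → Fin k → V} {firstv lastv : Fin k → V}
  (hICC : IsICC D k P Q tgt firstv lastv)
include hICC

theorem lastv_memP (i : Fin k) : lastv i ∈ P i := mem_of_getLast' (hICC.last_eq i)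

theorem firstv_memP (i : Fin k) : firstv i ∈ P i := List.mem_of_mem_head? (hICC.head_eq i)

theorem memP_unique {v : V} {i j : Fin k} (hi : v ∈ P i) (hj : v ∈ P j) : i = j := by
  by_contra h; exact hICC.disj_P i j h v hi hj

theorem lastv_inj : Function.Injective lastv := fun i j h =>
  memP_unique hICC (lastv_memP hICC i) (h ▸ lastv_memP hICC j)

theorem nodupP (i : Fin k) : (P i).Nodup := (hICC.path_P i).2.1

omit hICC in
theorem seg_suffix (i j : Fin k) : segICC P tgt i j <:+ P j := List.drop_suffix _ _

theorem seg_head {i j : Fin k} (hij : i ≠ j) : (segICC P tgt i j).head? = some (tgt i j) :=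
  head?_drop_idxOf (hICC.tgt_mem i j hij)

theorem seg_ne {i j : Fin k} (hij : i ≠ j) : segICC P tgt i j ≠ [] := by
  intro h
  have := seg_head hICC hij
  rw [h] at this; simp at this

theorem seg_last {i j : Fin k} (hij : i ≠ j) :
    (segICC P tgt i j).getLast? = some (lastv j) := by
  obtain ⟨pre, hpre⟩ := seg_suffix (P := P) (tgt := tgt) i j
  have := hICC.last_eq j
  rw [← hpre] at this
  rwa [List.getLast?_append_of_ne_nil pre (seg_ne hICC hij)] at this

theorem lastv_mem_seg {i j : Fin k} (hij : i ≠ j) : lastv j ∈ segICC P tgt i j :=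
  mem_of_getLast' (seg_last hICC hij)

omit hICC in
theorem seg_subset_P {i j : Fin k} : ∀ v ∈ segICC P tgt i j, v ∈ P j := fun _ hv =>
  (seg_suffix i j).sublist.mem hv

theorem seg_nodup (i j : Fin k) : (segICC P tgt i j).Nodup :=
  (seg_suffix i j).sublist.nodup (nodupP hICC j)

end ICC


section ICC2
open LA List

variable {k : ℕ} {D : Digr V} {P : Fin k → List V} {Q : Fin k → Fin k → List V}
  {tgt : Fin k → Fin k → V} {firstv lastv : Fin k → V}
  (hICC : IsICC D k P Q tgt firstv lastv)
include hICC

theorem conn_nodup {i j : Fin k} (hij : i ≠ j) : (connICC Q tgt lastv i j).Nodup :=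
  (hICC.conn_path i j hij).2.1

theorem conn_arcs {i j : Fin k} (hij : i ≠ j) : listArcs (connICC Q tgt lastv i j) ⊆ D.arcs := by
  rw [hICC.arcs_eq]
  intro a ha
  apply Finset.mem_union_right
  rw [Finset.mem_biUnion]
  exact ⟨(i, j), Finset.mem_univ _, by simpa [hij, connICC] using ha⟩

theorem P_arcs (m : Fin k) : listArcs (P m) ⊆ D.arcs := by
  rw [hICC.arcs_eq]
  intro a ha
  apply Finset.mem_union_left
  rw [Finset.mem_biUnion]
  exact ⟨m, Finset.mem_univ _, ha⟩

/-- Any arc of `D` is a `P`-arc or a connecting-path arc. -/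
theorem arc_cases_s11 {x y : V} (h : (x, y) ∈ D.arcs) :
    (∃ m, (x, y) ∈ listArcs (P m)) ∨
    (∃ i j, i ≠ j ∧ (x, y) ∈ listArcs (connICC Q tgt lastv i j)) := by
  rw [hICC.arcs_eq, Finset.mem_union] at h
  rcases h with h | h
  · rw [Finset.mem_biUnion] at h
    obtain ⟨m, -, hm⟩ := h
    exact Or.inl ⟨m, hm⟩
  · rw [Finset.mem_biUnion] at h
    obtain ⟨⟨i, j⟩, -, hm⟩ := h
    by_cases hij : i = j
    · simp [hij] at hm
    · exact Or.inr ⟨i, j, hij, by simpa [hij, connICC] using hm⟩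

theorem vert_cases {v : V} (h : v ∈ D.verts) :
    (∃ m, v ∈ P m) ∨ (∃ i j, i ≠ j ∧ v ∈ Q i j) := by
  rw [hICC.verts_eq, Finset.mem_union] at h
  rcases h with h | h
  · rw [Finset.mem_biUnion] at h
    obtain ⟨m, -, hm⟩ := h
    exact Or.inl ⟨m, by simpa using hm⟩
  · rw [Finset.mem_biUnion] at h
    obtain ⟨⟨i, j⟩, -, hm⟩ := h
    by_cases hij : i = j
    · simp [hij] at hm
    · exact Or.inr ⟨i, j, hij, by simpa [hij] using hm⟩

omit hICC in
theorem mem_bt {v : V} {i j : Fin k} (h : v ∈ btICC P Q tgt i j) :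
    v ∈ Q i j ∨ v ∈ segICC P tgt i j := by
  rwa [btICC, List.mem_append] at h

theorem lastv_not_mem_Q (m i j : Fin k) (hij : i ≠ j) : lastv m ∉ Q i j := fun h =>
  hICC.disj_QP i j hij _ h m (lastv_memP hICC m)

theorem root_not_mem_bt {i j : Fin k} (hij : i ≠ j) : lastv i ∉ btICC P Q tgt i j := by
  intro h
  rcases mem_bt h with h | h
  · exact lastv_not_mem_Q hICC i i j hij h
  · exact hICC.disj_P i j hij _ (lastv_memP hICC i) (seg_subset_P _ h)

theorem bt_nodup {i j : Fin k} (hij : i ≠ j) : (btICC P Q tgt i j).Nodup := by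
  rw [btICC, List.nodup_append]
  refine ⟨(conn_nodup hICC hij).of_cons.of_append_left, seg_nodup hICC i j, ?_⟩
  · intro v hv w hv' hvw
    subst hvw
    exact hICC.disj_QP i j hij v hv j (seg_subset_P _ hv')

theorem branch_nodup {i j : Fin k} (hij : i ≠ j) : (branchICC P Q tgt lastv i j).Nodup :=
  List.nodup_cons.2 ⟨root_not_mem_bt hICC hij, bt_nodup hICC hij⟩

theorem bt_last {i j : Fin k} (hij : i ≠ j) :
    (btICC P Q tgt i j).getLast? = some (lastv j) := by
  rw [btICC, List.getLast?_append_of_ne_nil _ (seg_ne hICC hij)]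
  exact seg_last hICC hij

theorem branch_last {i j : Fin k} (hij : i ≠ j) :
    (branchICC P Q tgt lastv i j).getLast? = some (lastv j) := by
  rw [branchICC]
  cases h : btICC P Q tgt i j with
  | nil => exact absurd h (by rw [btICC]; exact List.append_ne_nil_of_right_ne_nil (Q i j) (seg_ne hICC hij))
  | cons b s => rw [List.getLast?_cons_cons, ← h, bt_last hICC hij]

omit hICC in
theorem bt_head {i j : Fin k} : (btICC P Q tgt i j).head? = (Q i j ++ [tgt i j]).head? ∨
    ((btICC P Q tgt i j).head? = (segICC P tgt i j).head? ∧ Q i j = []) := by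
  cases hq : Q i j with
  | nil => exact Or.inr ⟨by rw [btICC, hq, List.nil_append], rfl⟩
  | cons a t => exact Or.inl (by rw [btICC, hq]; simp)

theorem bt_head_eq_connTail_head {i j : Fin k} (hij : i ≠ j) :
    (btICC P Q tgt i j).head? = (Q i j ++ [tgt i j]).head? := by
  rcases bt_head (P := P) (Q := Q) (tgt := tgt) (i := i) (j := j) with h | ⟨h, hq⟩
  · exact h
  · rw [h, hq, List.nil_append, List.head?_cons, seg_head hICC hij]

theorem conn_prefix_branch {i j : Fin k} (hij : i ≠ j) :
    connICC Q tgt lastv i j <+: branchICC P Q tgt lastv i j := by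
  obtain ⟨s, hs⟩ : ∃ s, segICC P tgt i j = tgt i j :: s := by
    cases h : segICC P tgt i j with
    | nil => exact absurd h (seg_ne hICC hij)
    | cons a t =>
      have := seg_head hICC hij
      rw [h] at this; simp at this; exact ⟨t, by rw [this]⟩
  refine ⟨s, ?_⟩
  rw [connICC, branchICC, btICC, hs]
  simp

theorem conn_arcs_sub_branch {i j : Fin k} (hij : i ≠ j) :
    listArcs (connICC Q tgt lastv i j) ⊆ listArcs (branchICC P Q tgt lastv i j) :=
  listArcs_prefix (conn_prefix_branch hICC hij)

theorem branch_arcs_sub_D {i j : Fin k} (hij : i ≠ j) :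
    listArcs (branchICC P Q tgt lastv i j) ⊆ D.arcs := by
  intro a ha
  obtain ⟨x, y⟩ := a
  have : branchICC P Q tgt lastv i j = (lastv i :: Q i j) ++ segICC P tgt i j := by
    rw [branchICC, btICC]; simp
  rw [this] at ha
  rcases mem_listArcs_append ha with h | h | ⟨h1, h2⟩
  · exact conn_arcs hICC hij (listArcs_prefix ⟨[tgt i j], by rw [connICC]; simp⟩ h)
  · exact P_arcs hICC j (listArcs_suffix (seg_suffix i j) h)
  · rw [seg_head hICC hij] at h2
    have hy : y = tgt i j := by simpa using h2.symm
    subst hy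
    have harc : (x, tgt i j) ∈ listArcs ((lastv i :: Q i j) ++ [tgt i j]) :=
      link_mem_append h1 rfl
    refine conn_arcs hICC hij ?_
    rwa [connICC, ← List.cons_append]

end ICC2


section ICC3
open LA List

variable {k : ℕ} {D : Digr V} {P : Fin k → List V} {Q : Fin k → Fin k → List V}
  {tgt : Fin k → Fin k → V} {firstv lastv : Fin k → V}
  (hICC : IsICC D k P Q tgt firstv lastv)
include hICC

theorem P_subset_verts {m : Fin k} : ∀ v ∈ P m, v ∈ D.verts := (hICC.path_P m).2.2.1

theorem Q_subset_verts {i j : Fin k} (hij : i ≠ j) : ∀ v ∈ Q i j, v ∈ D.verts := by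
  intro v hv
  exact (hICC.conn_path i j hij).2.2.1 v
    (List.mem_cons_of_mem _ (List.mem_append_left _ hv))

theorem branch_subset_verts {i j : Fin k} (hij : i ≠ j) :
    ∀ v ∈ branchICC P Q tgt lastv i j, v ∈ D.verts := by
  intro v hv
  rw [branchICC, List.mem_cons] at hv
  rcases hv with rfl | hv
  · exact P_subset_verts hICC _ (lastv_memP hICC i)
  · rcases mem_bt hv with h | h
    · exact Q_subset_verts hICC hij _ h
    · exact P_subset_verts hICC _ (seg_subset_P _ h)

theorem Q_mem_unique {v : V} {i j i' j' : Fin k} (hij : i ≠ j) (hij' : i' ≠ j')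
    (h : v ∈ Q i j) (h' : v ∈ Q i' j') : i = i' ∧ j = j' := by
  by_contra hc
  have : (i, j) ≠ (i', j') := by
    intro he; rw [Prod.ext_iff] at he; exact hc ⟨he.1, he.2⟩
  exact hICC.disj_QQ i j i' j' hij hij' this v h h'

theorem mem_bt_unique {v : V} {i j j' : Fin k} (hij : i ≠ j) (hij' : i ≠ j')
    (h : v ∈ btICC P Q tgt i j) (h' : v ∈ btICC P Q tgt i j') : j = j' := by
  rcases mem_bt h with h1 | h1 <;> rcases mem_bt h' with h2 | h2
  · exact (Q_mem_unique hICC hij hij' h1 h2).2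
  · exact absurd (seg_subset_P _ h2) (hICC.disj_QP i j hij v h1 j')
  · exact absurd (seg_subset_P _ h1) (hICC.disj_QP i j' hij' v h2 j)
  · exact memP_unique hICC (seg_subset_P _ h1) (seg_subset_P _ h2)

theorem lastv_mem_bt_eq {m i j : Fin k} (hij : i ≠ j) (h : lastv m ∈ btICC P Q tgt i j) :
    m = j := by
  rcases mem_bt h with h | h
  · exact absurd h (lastv_not_mem_Q hICC m i j hij)
  · exact memP_unique hICC (lastv_memP hICC m) (seg_subset_P _ h)

omit hICC in
theorem conn_dropLast {i j : Fin k} :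
    (connICC Q tgt lastv i j).dropLast = lastv i :: Q i j := by
  show (lastv i :: (Q i j ++ [tgt i j])).dropLast = _
  rw [List.dropLast_cons_of_ne_nil (by simp), List.dropLast_concat]

theorem bt_dropLast {i j : Fin k} (hij : i ≠ j) :
    (btICC P Q tgt i j).dropLast = Q i j ++ (segICC P tgt i j).dropLast := by
  rw [btICC, List.dropLast_append_of_ne_nil (seg_ne hICC hij)]

/-- The only arcs of `D` leaving `lastv i` go to the heads of the connecting paths. -/
theorem arcs_from_lastv {i : Fin k} {w : V} (h : (lastv i, w) ∈ D.arcs) :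
    ∃ j, i ≠ j ∧ (btICC P Q tgt i j).head? = some w := by
  rcases arc_cases_s11 hICC h with ⟨m, hm⟩ | ⟨i', j', hij', hm⟩
  · exfalso
    have h1 : lastv i ∈ (P m).dropLast := fst_mem_dropLast hm
    have hmi : m = i := memP_unique hICC ((List.dropLast_sublist _).mem h1) (lastv_memP hICC i)
    subst hmi
    exact getLast_not_mem_dropLast (nodupP hICC m) (hICC.last_eq m) h1
  · have h1 : lastv i ∈ (connICC Q tgt lastv i' j').dropLast := fst_mem_dropLast hm
    rw [conn_dropLast, List.mem_cons] at h1
    rcases h1 with h1 | h1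
    · have hii : i = i' := (lastv_inj hICC h1.symm).symm
      subst hii
      refine ⟨j', hij', ?_⟩
      rw [bt_head_eq_connTail_head hICC hij']
      rw [connICC] at hm
      rcases mem_listArcs_cons.1 hm with ⟨-, hh⟩ | hm'
      · exact hh
      · exfalso
        rcases List.mem_append.1 (fst_mem hm') with h | h
        · exact lastv_not_mem_Q hICC i i j' hij' h
        · simp at h
          exact hij' (memP_unique hICC (lastv_memP hICC i) (h ▸ hICC.tgt_mem i j' hij'))
    · exact absurd h1 (lastv_not_mem_Q hICC i i' j' hij')

end ICC3


section ICC4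
open LA List

variable {k : ℕ} {D : Digr V} {P : Fin k → List V} {Q : Fin k → Fin k → List V}
  {tgt : Fin k → Fin k → V} {firstv lastv : Fin k → V}
  (hICC : IsICC D k P Q tgt firstv lastv)
include hICC

omit hICC in
theorem branch_arc_of_ne_root {i j : Fin k} {x y : V}
    (h : (x, y) ∈ listArcs (branchICC P Q tgt lastv i j)) (hx : x ≠ lastv i) :
    (x, y) ∈ listArcs (btICC P Q tgt i j) := by
  rw [branchICC] at h
  rcases mem_listArcs_cons.1 h with ⟨h1, -⟩ | h1
  · exact absurd h1 hx
  · exact h1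

/-- Arcs of `D` leaving a vertex of `Q i j` are arcs of the connecting path. -/
theorem arcs_from_Q {i j : Fin k} (hij : i ≠ j) {x y : V} (hx : x ∈ Q i j)
    (h : (x, y) ∈ D.arcs) : (x, y) ∈ listArcs (connICC Q tgt lastv i j) := by
  rcases arc_cases_s11 hICC h with ⟨m, hm⟩ | ⟨i', j', hij', hm⟩
  · exact absurd (fst_mem hm) (hICC.disj_QP i j hij x hx m)
  · have h1 := fst_mem_dropLast hm
    rw [conn_dropLast, List.mem_cons] at h1
    rcases h1 with h1 | h1
    · exact absurd (h1 ▸ hx) (lastv_not_mem_Q hICC i' i j hij)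
    · obtain ⟨rfl, rfl⟩ := Q_mem_unique hICC hij hij' hx h1
      exact hm

/-- Arcs of `D` leaving a non-inner vertex of `P m` are arcs of `P m`. -/
theorem arcs_from_P {m : Fin k} {x y : V} (hx : x ∈ P m)
    (hnl : ∀ m', x ≠ lastv m') (h : (x, y) ∈ D.arcs) : (x, y) ∈ listArcs (P m) := by
  rcases arc_cases_s11 hICC h with ⟨m', hm⟩ | ⟨i', j', hij', hm⟩
  · have : m' = m := memP_unique hICC (fst_mem hm) hx
    exact this ▸ hm
  · exfalso
    have h1 := fst_mem_dropLast hm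
    rw [conn_dropLast, List.mem_cons] at h1
    rcases h1 with h1 | h1
    · exact hnl i' h1
    · exact hICC.disj_QP i' j' hij' x h1 m hx

omit hICC in
/-- Arcs of a nodup list `L = pre ++ suf` leaving a vertex of `suf` are arcs of `suf`. -/
theorem arcs_in_suffix {L suf : List V} (hL : L.Nodup) (hsuf : suf <:+ L) {x y : V}
    (hx : x ∈ suf) (h : (x, y) ∈ listArcs L) : (x, y) ∈ listArcs suf := by
  obtain ⟨pre, rfl⟩ := hsuf
  rcases mem_listArcs_append h with h1 | h1 | ⟨h1, h2⟩
  · exact absurd (fst_mem h1) (fun hm => (List.nodup_append.1 hL).2.2 x hm x hx rfl)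
  · exact h1
  · exact absurd (mem_of_getLast' h1) (fun hm => (List.nodup_append.1 hL).2.2 x hm x hx rfl)

/-- Forcing: arcs of `D` leaving a non-final vertex of `btICC i j` follow `btICC i j`. -/
theorem D_force {i j : Fin k} (hij : i ≠ j) :
    ∀ x y, x ∈ (btICC P Q tgt i j).dropLast → (x, y) ∈ D.arcs →
      (x, y) ∈ listArcs (btICC P Q tgt i j) := by
  intro x y hx harc
  rw [bt_dropLast hICC hij, List.mem_append] at hx
  rcases hx with hx | hx
  · have h1 := arcs_from_Q hICC hij hx harc
    refine branch_arc_of_ne_root (conn_arcs_sub_branch hICC hij h1) ?_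
    intro he
    exact lastv_not_mem_Q hICC i i j hij (he ▸ hx)
  · -- x is a non-last vertex of the segment
    have hxseg : x ∈ segICC P tgt i j := (List.dropLast_sublist _).mem hx
    have hxP : x ∈ P j := seg_subset_P _ hxseg
    have hnl : ∀ m', x ≠ lastv m' := by
      intro m' he
      have hm'j : m' = j := memP_unique hICC (lastv_memP hICC m') (he ▸ hxP)
      subst hm'j
      exact getLast_not_mem_dropLast (seg_nodup hICC i m') (seg_last hICC hij) (he ▸ hx)
    have h1 := arcs_from_P hICC hxP hnl harc
    have h2 := arcs_in_suffix (nodupP hICC j) (seg_suffix i j) hxseg h1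
    exact listArcs_append_right _ _ h2

theorem firstv_tgt (j : Fin k) : ∃ i, i ≠ j ∧ tgt i j = firstv j := by
  obtain ⟨u, -, harc⟩ := hICC.indeg j
  rcases arc_cases_s11 hICC harc with ⟨m, hm⟩ | ⟨i', j', hij', hm⟩
  · exfalso
    have h1 := snd_mem_tail hm
    by_cases hmj : m = j
    · subst hmj
      exact head_not_mem_tail (nodupP hICC m) (hICC.head_eq m) h1
    · exact hICC.disj_P m j hmj _ ((List.tail_sublist _).mem h1) (firstv_memP hICC j)
  · have h1 := snd_mem_tail hm
    rw [connICC, List.tail_cons, List.mem_append] at h1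
    rcases h1 with h1 | h1
    · exact absurd (firstv_memP hICC j) (hICC.disj_QP i' j' hij' _ h1 j)
    · rw [List.mem_singleton] at h1
      have hj : j' = j := memP_unique hICC (h1 ▸ hICC.tgt_mem i' j' hij') (firstv_memP hICC j)
      subst hj
      exact ⟨i', hij', h1.symm⟩

theorem seg_all {i j : Fin k} (h : tgt i j = firstv j) : segICC P tgt i j = P j := by
  obtain ⟨t, ht⟩ : ∃ t, P j = firstv j :: t := by
    cases hp : P j with
    | nil => exact absurd (hICC.head_eq j) (by rw [hp]; simp)
    | cons a s =>
      have := hICC.head_eq j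
      rw [hp] at this; simp at this; exact ⟨s, by rw [this]⟩
  rw [segICC, h, ht, List.idxOf_cons_self, List.drop_zero]

end ICC4


section ICC5
open LA List

variable {k : ℕ} {D : Digr V} {P : Fin k → List V} {Q : Fin k → Fin k → List V}
  {tgt : Fin k → Fin k → V} {firstv lastv : Fin k → V}
  (hICC : IsICC D k P Q tgt firstv lastv)
include hICC

omit hICC in
theorem getLast?_take_idxOf {l : List V} {x : V} (h : x ∈ l) :
    (l.take (l.idxOf x + 1)).getLast? = some x := by
  induction l with
  | nil => simp at h
  | cons a t ih =>
    by_cases hx : x = a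
    · subst hx; simp [List.idxOf_cons_self]
    · have hxt : x ∈ t := by rcases List.mem_cons.1 h with h | h; exact absurd h hx; exact h
      have hne : t.take (t.idxOf x + 1) ≠ [] := by
        intro hemp
        have := ih hxt
        rw [hemp] at this; simp at this
      rw [List.idxOf_cons_ne _ (Ne.symm hx), List.take_succ_cons]
      cases htk : t.take (t.idxOf x + 1) with
      | nil => exact absurd htk hne
      | cons b s =>
        rw [List.getLast?_cons_cons, ← htk]
        exact ih hxt

/-- The out-arborescence rooted at `lastv i`. -/
def TiICC (i : Fin k) : Digr V where
  verts := (Finset.univ.erase i).biUnion (fun j => (branchICC P Q tgt lastv i j).toFinset)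
  arcs := (Finset.univ.erase i).biUnion (fun j => listArcs (branchICC P Q tgt lastv i j))
  arcs_sub := by
    intro a ha
    rw [Finset.mem_biUnion] at ha
    obtain ⟨j, hj, hja⟩ := ha
    obtain ⟨x, y⟩ := a
    constructor <;> rw [Finset.mem_biUnion] <;> refine ⟨j, hj, ?_⟩ <;> rw [List.mem_toFinset]
    · exact fst_mem hja
    · exact snd_mem hja
  no_loops := by
    intro a ha
    rw [Finset.mem_biUnion] at ha
    obtain ⟨j, hj, hja⟩ := ha
    exact D.no_loops a
      (branch_arcs_sub_D hICC (Ne.symm (Finset.mem_erase.1 hj).1) (by exact hja))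

theorem Ti_arcs_iff {i : Fin k} {x y : V} : ((x, y) ∈ (TiICC hICC i).arcs) ↔
    ∃ j, i ≠ j ∧ (x, y) ∈ listArcs (branchICC P Q tgt lastv i j) := by
  show _ ∈ Finset.biUnion _ _ ↔ _
  rw [Finset.mem_biUnion]
  constructor
  · rintro ⟨j, hj, h⟩
    exact ⟨j, Ne.symm (Finset.mem_erase.1 hj).1, h⟩
  · rintro ⟨j, hj, h⟩
    exact ⟨j, Finset.mem_erase.2 ⟨Ne.symm hj, Finset.mem_univ _⟩, h⟩

theorem Ti_verts_iff {i : Fin k} {v : V} : (v ∈ (TiICC hICC i).verts) ↔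
    ∃ j, i ≠ j ∧ v ∈ branchICC P Q tgt lastv i j := by
  show _ ∈ Finset.biUnion _ _ ↔ _
  rw [Finset.mem_biUnion]
  constructor
  · rintro ⟨j, hj, h⟩
    exact ⟨j, Ne.symm (Finset.mem_erase.1 hj).1, List.mem_toFinset.1 h⟩
  · rintro ⟨j, hj, h⟩
    exact ⟨j, Finset.mem_erase.2 ⟨Ne.symm hj, Finset.mem_univ _⟩, List.mem_toFinset.2 h⟩

theorem Ti_sub (i : Fin k) : (TiICC hICC i).Sub D := by
  constructor
  · intro v hv
    obtain ⟨j, hj, h⟩ := (Ti_verts_iff hICC).1 hv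
    exact branch_subset_verts hICC hj v h
  · intro a ha
    obtain ⟨x, y⟩ := a
    obtain ⟨j, hj, h⟩ := (Ti_arcs_iff hICC).1 ha
    exact branch_arcs_sub_D hICC hj h

theorem exists_ne_fin (i : Fin k) : ∃ j : Fin k, i ≠ j := by
  have h2 := hICC.two_le
  by_cases h : i.val = 0
  · exact ⟨⟨1, by omega⟩, fun hc => by rw [Fin.ext_iff] at hc; simp at hc; omega⟩
  · exact ⟨⟨0, by omega⟩, fun hc => by rw [Fin.ext_iff] at hc; simp at hc; omega⟩

theorem root_mem_Ti (i : Fin k) : lastv i ∈ (TiICC hICC i).verts := by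
  obtain ⟨j, hj⟩ := exists_ne_fin hICC i
  exact (Ti_verts_iff hICC).2 ⟨j, hj, by rw [branchICC]; exact List.mem_cons_self⟩

theorem Ti_force {i j : Fin k} (hij : i ≠ j) :
    ∀ x y, x ∈ btICC P Q tgt i j → (x, y) ∈ (TiICC hICC i).arcs →
      (x, y) ∈ listArcs (btICC P Q tgt i j) := by
  intro x y hx harc
  obtain ⟨j', hj', h⟩ := (Ti_arcs_iff hICC).1 harc
  have hxne : x ≠ lastv i := fun he => root_not_mem_bt hICC hij (he ▸ hx)
  have hxbt : x ∈ btICC P Q tgt i j' := by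
    have := fst_mem h
    rw [branchICC, List.mem_cons] at this
    rcases this with h1 | h1
    · exact absurd h1 hxne
    · exact h1
  have : j' = j := mem_bt_unique hICC hj' hij hxbt hx
  subst this
  exact branch_arc_of_ne_root h hxne

theorem no_arc_into_root {i : Fin k} {x : V} (h : (x, lastv i) ∈ (TiICC hICC i).arcs) :
    False := by
  obtain ⟨j, hj, harc⟩ := (Ti_arcs_iff hICC).1 h
  have := snd_mem_tail harc
  rw [branchICC, List.tail_cons] at this
  exact root_not_mem_bt hICC hj this

theorem arcs_from_root {i : Fin k} {w : V} (h : (lastv i, w) ∈ (TiICC hICC i).arcs) :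
    ∃ j, i ≠ j ∧ (btICC P Q tgt i j).head? = some w := by
  obtain ⟨j, hj, harc⟩ := (Ti_arcs_iff hICC).1 h
  rw [branchICC] at harc
  rcases mem_listArcs_cons.1 harc with ⟨-, hh⟩ | h1
  · exact ⟨j, hj, hh⟩
  · exact absurd (fst_mem h1) (root_not_mem_bt hICC hj)

/-- Every path in `TiICC i` starting at the root is a prefix of some branch. -/
theorem Ti_path_prefix {i : Fin k} {p : List V} (hp : (TiICC hICC i).IsPath p)
    (hh : p.head? = some (lastv i)) :
    ∃ j, i ≠ j ∧ p <+: branchICC P Q tgt lastv i j := by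
  obtain ⟨q, rfl⟩ : ∃ q, p = lastv i :: q := by
    cases p with
    | nil => simp at hh
    | cons a t => simp at hh; exact ⟨t, by rw [hh]⟩
  cases q with
  | nil =>
    obtain ⟨j, hj⟩ := exists_ne_fin hICC i
    exact ⟨j, hj, by rw [branchICC]; exact ⟨btICC P Q tgt i j, rfl⟩⟩
  | cons b r =>
    have harc : (lastv i, b) ∈ (TiICC hICC i).arcs := (List.isChain_cons_cons.1 hp.2.2.2).1
    obtain ⟨j, hj, hhd⟩ := arcs_from_root hICC harc
    refine ⟨j, hj, ?_⟩
    have hpre : b :: r <+: btICC P Q tgt i j := by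
      refine forced_prefix_full (b :: r) _ (bt_nodup hICC hj) (Ti_force hICC hj)
        ((List.isChain_cons_cons.1 hp.2.2.2).2) (by rw [hhd]; rfl) (by simp)
    obtain ⟨s, hs⟩ := hpre
    exact ⟨s, by rw [branchICC, ← hs]; rfl⟩

theorem Ti_outArb (i : Fin k) : (TiICC hICC i).IsOutArb (lastv i) := by
  refine ⟨root_mem_Ti hICC i, ?_⟩
  intro v hv
  obtain ⟨j, hj, hvb⟩ := (Ti_verts_iff hICC).1 hv
  set L := branchICC P Q tgt lastv i j with hL
  refine ⟨L.take (L.idxOf v + 1), ⟨⟨?_, ?_, ?_, ?_⟩, ?_, ?_⟩, ?_⟩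
  · rw [hL, branchICC, List.take_succ_cons]; simp
  · exact (List.take_sublist _ _).nodup (branch_nodup hICC hj)
  · intro x hx
    exact (Ti_verts_iff hICC).2 ⟨j, hj, (List.take_sublist _ _).mem hx⟩
  · refine chain'_of_subset ?_
    intro a ha
    exact (Ti_arcs_iff hICC (x := a.1) (y := a.2)).2 ⟨j, hj,
      listArcs_prefix (List.take_prefix _ _) (by simpa using ha)⟩
  · rw [hL, branchICC, List.take_succ_cons, List.head?_cons]
  · exact getLast?_take_idxOf hvb
  · -- uniqueness
    rintro p ⟨hp, hph, hpl⟩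
    by_cases hvroot : v = lastv i
    · rw [hvroot] at hpl ⊢
      have h1 : p = [lastv i] := nodup_head_getLast_eq hp.2.1 hph hpl
      rw [h1, hL, branchICC, List.idxOf_cons_self, List.take_succ_cons]
      simp
    · obtain ⟨j', hj', hpre⟩ := Ti_path_prefix hICC hp hph
      have hvp : v ∈ p := mem_of_getLast' hpl
      have hvbt' : v ∈ btICC P Q tgt i j' := by
        have := hpre.sublist.mem hvp
        rw [branchICC, List.mem_cons] at this
        rcases this with h | h
        · exact absurd h hvroot
        · exact h
      have hvbt : v ∈ btICC P Q tgt i j := by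
        rw [hL, branchICC, List.mem_cons] at hvb
        rcases hvb with h | h
        · exact absurd h hvroot
        · exact h
      have : j' = j := mem_bt_unique hICC hj' hj hvbt' hvbt
      subst this
      refine eq_of_prefix_prefix_getLast hpre (List.take_prefix _ _)
        (branch_nodup hICC hj') hp.1 ?_ ?_
      · rw [hL, branchICC, List.take_succ_cons]; simp
      · rw [hpl, getLast?_take_idxOf hvb]

end ICC5


section ICC6
open LA List

variable {k : ℕ} {D : Digr V} {P : Fin k → List V} {Q : Fin k → Fin k → List V}
  {tgt : Fin k → Fin k → V} {firstv lastv : Fin k → V}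
  (hICC : IsICC D k P Q tgt firstv lastv)
include hICC

omit hICC in
theorem getLast?_cons_ne {a : V} {l : List V} (h : l ≠ []) :
    (a :: l).getLast? = l.getLast? := by
  cases l with
  | nil => exact absurd rfl h
  | cons b s => rw [List.getLast?_cons_cons]

omit hICC in
theorem mem_VI {v : V} : v ∈ Finset.univ.image lastv ↔ ∃ i, lastv i = v := by simp

theorem Ti_leaves (i : Fin k) :
    (TiICC hICC i).leaves = (Finset.univ.image lastv).erase (lastv i) := by
  ext v
  rw [Digr.leaves, Finset.mem_filter, Finset.mem_erase]
  constructor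
  · rintro ⟨hv, hout⟩
    obtain ⟨j, hj, hvb⟩ := (Ti_verts_iff hICC).1 hv
    rcases mem_dropLast_or_getLast hvb with hd | hl
    · exfalso
      obtain ⟨y, hy⟩ := exists_arc_of_mem_dropLast hd
      have hyarc : (v, y) ∈ (TiICC hICC i).arcs := (Ti_arcs_iff hICC).2 ⟨j, hj, hy⟩
      have : y ∈ (TiICC hICC i).outNbr v := by
        rw [Digr.outNbr, Finset.mem_image]
        exact ⟨(v, y), Finset.mem_filter.2 ⟨hyarc, rfl⟩, rfl⟩
      rw [hout] at this
      exact absurd this (Finset.notMem_empty _)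
    · rw [branch_last hICC hj] at hl
      have hv' : v = lastv j := by simpa using hl.symm
      subst hv'
      exact ⟨fun he => hj (lastv_inj hICC he.symm), mem_VI.2 ⟨j, rfl⟩⟩
  · rintro ⟨hne, hvi⟩
    obtain ⟨j, rfl⟩ := mem_VI.1 hvi
    have hj : i ≠ j := fun he => hne (by rw [he])
    refine ⟨(Ti_verts_iff hICC).2 ⟨j, hj, mem_of_getLast' (branch_last hICC hj)⟩, ?_⟩
    rw [Finset.eq_empty_iff_forall_notMem]
    intro y hy
    rw [Digr.outNbr, Finset.mem_image] at hy
    obtain ⟨⟨x, y'⟩, ha, hy'⟩ := hy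
    rw [Finset.mem_filter] at ha
    have hx : x = lastv j := ha.2
    subst hx
    obtain ⟨j₂, hj₂, harc⟩ := (Ti_arcs_iff hICC).1 ha.1
    have hmem := fst_mem harc
    rw [branchICC, List.mem_cons] at hmem
    rcases hmem with h1 | h1
    · exact hne h1
    · have : j = j₂ := lastv_mem_bt_eq hICC hj₂ h1
      subst this
      exact getLast_not_mem_dropLast (branch_nodup hICC hj₂) (branch_last hICC hj₂)
        (fst_mem_dropLast harc)

theorem verts_cover {v : V} (hv : v ∈ D.verts) : ∃ i, v ∈ (TiICC hICC i).verts := by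
  rcases vert_cases hICC hv with ⟨m, hm⟩ | ⟨i, j, hij, hq⟩
  · obtain ⟨i, him, htgt⟩ := firstv_tgt hICC m
    refine ⟨i, (Ti_verts_iff hICC).2 ⟨m, Ne.symm (fun he => him he.symm), ?_⟩⟩
    rw [branchICC]
    refine List.mem_cons_of_mem _ (List.mem_append_right _ ?_)
    rwa [seg_all hICC htgt]
  · exact ⟨i, (Ti_verts_iff hICC).2 ⟨j, hij,
      List.mem_cons_of_mem _ (List.mem_append_left _ hq)⟩⟩

theorem arcs_cover {x y : V} (h : (x, y) ∈ D.arcs) : ∃ i, (x, y) ∈ (TiICC hICC i).arcs := by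
  rcases arc_cases_s11 hICC h with ⟨m, hm⟩ | ⟨i, j, hij, hm⟩
  · obtain ⟨i, him, htgt⟩ := firstv_tgt hICC m
    have him' : i ≠ m := him
    refine ⟨i, (Ti_arcs_iff hICC).2 ⟨m, him', ?_⟩⟩
    have h1 : (x, y) ∈ listArcs (segICC P tgt i m) := by rwa [seg_all hICC htgt]
    exact listArcs_subset_cons _ _ (listArcs_append_right _ _ h1)
  · exact ⟨i, (Ti_arcs_iff hICC).2 ⟨j, hij, conn_arcs_sub_branch hICC hij hm⟩⟩

theorem arcs_into_lastv {i : Fin k} {b : V} (h : (b, lastv i) ∈ D.arcs) :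
    b ∈ P i ∨ ∃ i', i' ≠ i ∧ (b = lastv i' ∨ b ∈ Q i' i) := by
  rcases arc_cases_s11 hICC h with ⟨m, hm⟩ | ⟨i', j', hij', hm⟩
  · have h1 := snd_mem_tail hm
    have hmi : m = i := memP_unique hICC ((List.tail_sublist _).mem h1) (lastv_memP hICC i)
    subst hmi
    exact Or.inl (fst_mem hm)
  · have h1 := snd_mem_tail hm
    rw [connICC, List.tail_cons, List.mem_append] at h1
    rcases h1 with h1 | h1
    · exact absurd h1 (lastv_not_mem_Q hICC i i' j' hij')
    · rw [List.mem_singleton] at h1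
      have hj : j' = i := memP_unique hICC (h1 ▸ hICC.tgt_mem i' j' hij') (lastv_memP hICC i)
      subst hj
      have h2 := fst_mem_dropLast hm
      rw [conn_dropLast, List.mem_cons] at h2
      exact Or.inr ⟨i', hij', h2⟩

/-- Existence of the P-path. -/
theorem branch_isPPath {a b : Fin k} (hab : a ≠ b) :
    D.IsPPathFromTo (Finset.univ.image lastv) (lastv a) (lastv b)
      (branchICC P Q tgt lastv a b) := by
  refine ⟨⟨by rw [branchICC]; simp, branch_nodup hICC hab, branch_subset_verts hICC hab,
    chain'_of_subset (fun x hx => branch_arcs_sub_D hICC hab hx)⟩,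
    by rw [branchICC]; rfl, branch_last hICC hab, mem_VI.2 ⟨a, rfl⟩, mem_VI.2 ⟨b, rfl⟩,
    fun he => hab (lastv_inj hICC he), ?_⟩
  intro v hv hvi
  obtain ⟨m, rfl⟩ := mem_VI.1 hvi
  rw [branchICC, List.drop_one, List.tail_cons, bt_dropLast hICC hab,
    List.mem_append] at hv
  rcases hv with hv | hv
  · exact lastv_not_mem_Q hICC m a b hab hv
  · have hmb : m = b := memP_unique hICC (lastv_memP hICC m)
      (seg_subset_P _ ((List.dropLast_sublist _).mem hv))
    subst hmb
    exact getLast_not_mem_dropLast (seg_nodup hICC a m) (seg_last hICC hab) hv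

/-- Uniqueness of the P-path. -/
theorem ppath_unique {a b : Fin k} (hab : a ≠ b) {p : List V}
    (hp : D.IsPPathFromTo (Finset.univ.image lastv) (lastv a) (lastv b) p) :
    p = branchICC P Q tgt lastv a b := by
  obtain ⟨⟨hne, hnd, hverts, hchain⟩, hhead, hlast, -, -, hlne, hinter⟩ := hp
  obtain ⟨q, rfl⟩ : ∃ q, p = lastv a :: q := by
    cases p with
    | nil => simp at hhead
    | cons x t => simp at hhead; exact ⟨t, by rw [hhead]⟩
  have hqne : q ≠ [] := by
    rintro rfl
    simp at hlast
    exact hlne (by rw [hlast])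
  have hqlast : q.getLast? = some (lastv b) := by rwa [getLast?_cons_ne hqne] at hlast
  obtain ⟨w, r, rfl⟩ : ∃ w r, q = w :: r := by
    cases q with
    | nil => exact absurd rfl hqne
    | cons w r => exact ⟨w, r, rfl⟩
  have harc : (lastv a, w) ∈ D.arcs := (List.isChain_cons_cons.1 hchain).1
  obtain ⟨j, haj, hw⟩ := arcs_from_lastv hICC harc
  have hforce := D_force hICC haj
  have := forced_prefix (A := D.arcs) (w :: r) (btICC P Q tgt a j) (bt_nodup hICC haj)
    hforce (List.isChain_cons_cons.1 hchain).2 (by rw [hw]; rfl) (by simp)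
  have hqnd : (w :: r).Nodup := (List.nodup_cons.1 hnd).2
  have hbtne : btICC P Q tgt a j ≠ [] :=
    List.append_ne_nil_of_right_ne_nil _ (seg_ne hICC haj)
  rcases this with hpre | hpre
  · have hlb : lastv b ∈ btICC P Q tgt a j := hpre.sublist.mem (mem_of_getLast' hqlast)
    have hjb : b = j := lastv_mem_bt_eq hICC haj hlb
    subst hjb
    have : w :: r = btICC P Q tgt a b := by
      refine prefix_eq_of_getLast hpre (bt_nodup hICC haj) (by simp) ?_
      rw [hqlast, bt_last hICC haj]
    rw [branchICC, this]
  · have hlj : lastv j ∈ w :: r := hpre.sublist.mem (mem_of_getLast' (bt_last hICC haj))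
    rcases mem_dropLast_or_getLast hlj with hd | hl
    · exfalso
      refine hinter (lastv j) ?_ (mem_VI.2 ⟨j, rfl⟩)
      rw [List.drop_one, List.tail_cons]
      exact hd
    · rw [hqlast] at hl
      have hjb : j = b := (lastv_inj hICC (by simpa using hl)).symm
      subst hjb
      have : btICC P Q tgt a j = w :: r := by
        refine prefix_eq_of_getLast hpre hqnd hbtne ?_
        rw [hqlast, bt_last hICC haj]
      rw [branchICC, this]

/-- No I-cycle. -/
theorem no_I_cycle {c : List V} (hc : D.IsCycle c)
    (h1 : (c.toFinset ∩ Finset.univ.image lastv).card = 1) : False := by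
  obtain ⟨⟨hne, hnd, hverts, hchain⟩, a0, b0, ha0, hb0, hback⟩ := hc
  obtain ⟨x, hx⟩ := Finset.card_eq_one.1 h1
  have hxmem : x ∈ c.toFinset ∩ Finset.univ.image lastv := by rw [hx]; exact Finset.mem_singleton_self x
  rw [Finset.mem_inter, List.mem_toFinset] at hxmem
  obtain ⟨i, hi⟩ := mem_VI.1 hxmem.2
  subst hi
  have hunique : ∀ v ∈ c, v ∈ Finset.univ.image lastv → v = lastv i := by
    intro v hv hvi
    have : v ∈ c.toFinset ∩ Finset.univ.image lastv :=
      Finset.mem_inter.2 ⟨List.mem_toFinset.2 hv, hvi⟩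
    rw [hx] at this
    exact Finset.mem_singleton.1 this
  obtain ⟨s, t, rfl⟩ := List.append_of_mem hxmem.1
  -- rotated cycle c' = lastv i :: (t ++ s)
  have hsplit := List.isChain_append.1 hchain
  set q := t ++ s with hq
  have hndc' : (lastv i :: q).Nodup := by
    have hperm : ((lastv i :: t) ++ s).Perm (s ++ (lastv i :: t)) := List.perm_append_comm
    exact hperm.nodup_iff.2 hnd
  have hchain' : (lastv i :: q).Chain' (fun u v => (u, v) ∈ D.arcs) := by
    rw [hq, ← List.cons_append]
    refine List.isChain_append.2 ?_
    refine ⟨hsplit.2.1, hsplit.1, ?_⟩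
    intro x' hx' y' hy'
    have hb0' : b0 = x' := by
      rw [List.getLast?_append_of_ne_nil s (by simp), hx'] at hb0
      exact (by simpa using hb0 : x' = b0).symm
    have ha0' : a0 = y' := by
      have hsne : s ≠ [] := by
        intro hs
        rw [hs] at hy'; simp at hy'
      rw [List.head?_append_of_ne_nil _ hsne] at ha0
      · rw [hy'] at ha0; exact (by simpa using ha0 : y' = a0).symm
    rw [← hb0', ← ha0']
    exact hback
  have hback' : ∀ z, (lastv i :: q).getLast? = some z → (z, lastv i) ∈ D.arcs := by
    intro z hz
    cases hs : s with
    | nil =>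
      rw [hq, hs, List.append_nil] at hz
      have hb0z : b0 = z := by
        rw [hs, List.nil_append] at hb0
        rw [hb0] at hz; simpa using hz
      have ha0i : a0 = lastv i := by
        rw [hs, List.nil_append] at ha0
        exact (by simpa using ha0 : lastv i = a0).symm
      rw [← hb0z, ← ha0i]
      exact hback
    | cons s0 s1 =>
      have hsne : s ≠ [] := by rw [hs]; simp
      have hz' : s.getLast? = some z := by
        rw [getLast?_cons_ne (by rw [hq]; exact List.append_ne_nil_of_right_ne_nil _ hsne),
          hq, List.getLast?_append_of_ne_nil t hsne] at hz
        exact hz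
      have := hsplit.2.2 z hz' (lastv i) rfl
      exact this
  -- q is nonempty
  obtain ⟨w, r, hwr⟩ : ∃ w r, q = w :: r := by
    cases hqc : q with
    | nil =>
      exfalso
      have : (lastv i :: q).getLast? = some (lastv i) := by rw [hqc]; rfl
      exact D.no_loops _ (hback' _ this) rfl
    | cons w r => exact ⟨w, r, rfl⟩
  have hnoVI : ∀ v ∈ q, v ∉ (Finset.univ.image lastv) := by
    intro v hv hvi
    have hvc : v ∈ s ++ lastv i :: t := by
      rw [hq] at hv
      rcases List.mem_append.1 hv with h | h
      · exact List.mem_append_right _ (List.mem_cons_of_mem _ h)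
      · exact List.mem_append_left _ h
    have := hunique v hvc hvi
    subst this
    exact (List.nodup_cons.1 hndc').1 hv
  have harc : (lastv i, w) ∈ D.arcs := by
    rw [hwr] at hchain'
    exact (List.isChain_cons_cons.1 hchain').1
  obtain ⟨j, hij, hw⟩ := arcs_from_lastv hICC harc
  have hforce := D_force hICC hij
  have hfp := forced_prefix (A := D.arcs) (w :: r) (btICC P Q tgt i j) (bt_nodup hICC hij)
    hforce (by rw [hwr] at hchain'; exact (List.isChain_cons_cons.1 hchain').2) (by rw [hw]; rfl)
    (by simp)
  rcases hfp with hpre | hpre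
  · -- back arc lands in lastv i: contradiction
    obtain ⟨z, hz⟩ : ∃ z, (w :: r).getLast? = some z := ⟨_, List.getLast?_eq_getLast_of_ne_nil (by simp)⟩
    have hzarc : (z, lastv i) ∈ D.arcs := by
      refine hback' z ?_
      rw [hwr, getLast?_cons_ne (by simp)]
      exact hz
    have hzbt : z ∈ btICC P Q tgt i j := hpre.sublist.mem (mem_of_getLast' hz)
    have hzq : z ∈ q := by rw [hwr]; exact mem_of_getLast' hz
    rcases arcs_into_lastv hICC hzarc with hzP | ⟨i', hi', hzz⟩
    · rcases mem_bt hzbt with h | h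
      · exact hICC.disj_QP i j hij z h i hzP
      · exact hICC.disj_P j i (Ne.symm hij) z (seg_subset_P _ h) hzP
    · rcases hzz with rfl | hzQ
      · exact hnoVI _ hzq (mem_VI.2 ⟨i', rfl⟩)
      · rcases mem_bt hzbt with h | h
        · have := Q_mem_unique hICC hij (hi') h hzQ
          exact hi' (this.1 ▸ this.2.symm ▸ rfl)
        · exact hICC.disj_QP i' i hi' z hzQ j (seg_subset_P _ h)
  · -- the branch end lastv j would be a second inner vertex on the cycle
    have : lastv j ∈ w :: r := hpre.sublist.mem (mem_of_getLast' (bt_last hICC hij))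
    rw [← hwr] at this
    exact hnoVI _ this (mem_VI.2 ⟨j, rfl⟩)

end ICC6


/-- Theorem 2: every ICC digraph is a `k`-GIC digraph with inner vertex set the set of
last vertices of the `k` disjoint paths. -/
theorem stmt11 (D : Digr V) (k : ℕ) (P : Fin k → List V)
    (Q : Fin k → Fin k → List V) (tgt : Fin k → Fin k → V)
    (firstv lastv : Fin k → V)
    (hICC : IsICC D k P Q tgt firstv lastv) :
    (Finset.univ.image lastv).card = k ∧
    ∃ T : V → Digr V, D.IsGIC (Finset.univ.image lastv) T := by
  classical
  constructor
  · rw [Finset.card_image_of_injective _ (lastv_inj hICC)]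
    simp
  · set T : V → Digr V := fun v =>
      if h : ∃ i, lastv i = v then TiICC hICC h.choose else ⟨∅, ∅, by simp, by simp⟩
      with hTdef
    have hT : ∀ i : Fin k, T (lastv i) = TiICC hICC i := by
      intro i
      have h : ∃ i', lastv i' = lastv i := ⟨i, rfl⟩
      rw [hTdef]
      simp only
      rw [dif_pos h]
      congr 1
      exact lastv_inj hICC h.choose_spec
    refine ⟨T, ?_, ?_, ?_, ?_, ?_, ?_⟩
    · intro v hv
      obtain ⟨i, rfl⟩ := mem_VI.1 hv
      exact P_subset_verts hICC _ (lastv_memP hICC i)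
    · intro v hv
      obtain ⟨i, rfl⟩ := mem_VI.1 hv
      rw [hT i]
      exact ⟨Ti_sub hICC i, Ti_outArb hICC i, Ti_leaves hICC i⟩
    · ext v
      rw [Finset.mem_biUnion]
      constructor
      · intro hv
        obtain ⟨i, hi⟩ := verts_cover hICC hv
        exact ⟨lastv i, mem_VI.2 ⟨i, rfl⟩, by rw [hT i]; exact hi⟩
      · rintro ⟨u, hu, hv⟩
        obtain ⟨i, rfl⟩ := mem_VI.1 hu
        rw [hT i] at hv
        exact (Ti_sub hICC i).1 hv
    · ext a
      obtain ⟨x, y⟩ := a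
      rw [Finset.mem_biUnion]
      constructor
      · intro hv
        obtain ⟨i, hi⟩ := arcs_cover hICC hv
        exact ⟨lastv i, mem_VI.2 ⟨i, rfl⟩, by rw [hT i]; exact hi⟩
      · rintro ⟨u, hu, hv⟩
        obtain ⟨i, rfl⟩ := mem_VI.1 hu
        rw [hT i] at hv
        exact (Ti_sub hICC i).2 hv
    · intro c hc h1
      exact no_I_cycle hICC hc h1
    · intro i hi j hj hne
      obtain ⟨a, rfl⟩ := mem_VI.1 hi
      obtain ⟨b, rfl⟩ := mem_VI.1 hj
      have hab : a ≠ b := fun he => hne (by rw [he])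
      exact ⟨branchICC P Q tgt lastv a b, branch_isPPath hICC hab,
        fun p hp => ppath_unique hICC hab hp⟩
end

section
/- For every K ≥ 2, let D be the digraph with vertex set {1, …, 3K−2}, inner vertex set V_I = {1, …, K}, and arc set consisting exactly of: (1 → K+1); (K → 2K); for each i ∈ {2, …, K−1}, the arcs (i → K+i) and (i → 3K−i); the arcs (K+1 → j) for every j ∈ {2, …, K}; the arcs (2K → j) for every j ∈ {1, …, K−1}; and for each i ∈ {2, …, K−1}, the arcs (K+i → j) for every j ∈ {i+1, …, K} and (3K−i → j) for every j ∈ {1, …, i−1}. Then D is a K-GIC digraph with inner vertex set V_I, and hence for every t ≥ 1 there exists a valid index code for D of length 2K − 1 = (2N+1)/3 packets, where N = 3K−2. -/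
open Finset

variable {V : Type} [DecidableEq V]

section GICaux
open Finset

lemma mem_outNbr {V : Type} [DecidableEq V] (D : Digr V) (v u : V) :
    u ∈ D.outNbr v ↔ (v, u) ∈ D.arcs := by
  simp only [Digr.outNbr, Finset.mem_image, Finset.mem_filter, Prod.exists]
  constructor
  · rintro ⟨a, b, ⟨h, rfl⟩, rfl⟩; exact h
  · intro h; exact ⟨v, u, ⟨h, rfl⟩, rfl⟩

def Tv (K i : ℕ) : Finset ℕ :=
  if 1 ≤ i ∧ i ≤ K ∧ 2 ≤ K then
    (Icc 1 K ∪ (if i ≤ K - 1 then {K + i} else ∅) ∪ (if 2 ≤ i then {3 * K - i} else ∅))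
  else ∅

def Ta (K i : ℕ) : Finset (ℕ × ℕ) :=
  if 1 ≤ i ∧ i ≤ K ∧ 2 ≤ K then
    ((if i ≤ K - 1 then {(i, K + i)} else ∅) ∪ (Icc (i+1) K).image (fun j => (K + i, j)) ∪
     (if 2 ≤ i then {(i, 3 * K - i)} else ∅) ∪ (Icc 1 (i-1)).image (fun j => (3 * K - i, j)))
  else ∅

lemma mem_Tv {K i v : ℕ} :
    v ∈ Tv K i ↔ (1 ≤ i ∧ i ≤ K ∧ 2 ≤ K) ∧
      ((1 ≤ v ∧ v ≤ K) ∨ (i ≤ K - 1 ∧ v = K + i) ∨ (2 ≤ i ∧ v = 3 * K - i)) := by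
  unfold Tv
  by_cases hg : 1 ≤ i ∧ i ≤ K ∧ 2 ≤ K
  · rw [if_pos hg]
    by_cases h1 : i ≤ K - 1 <;> by_cases h2 : 2 ≤ i <;>
      simp [h1, h2, hg, mem_union, mem_Icc] <;> omega
  · rw [if_neg hg]; simp [hg]

lemma mem_Ta {K i a b : ℕ} :
    (a, b) ∈ Ta K i ↔ (1 ≤ i ∧ i ≤ K ∧ 2 ≤ K) ∧
      ((i ≤ K - 1 ∧ a = i ∧ b = K + i) ∨
       (a = K + i ∧ i + 1 ≤ b ∧ b ≤ K) ∨
       (2 ≤ i ∧ a = i ∧ b = 3 * K - i) ∨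
       (a = 3 * K - i ∧ 1 ≤ b ∧ b ≤ i - 1)) := by
  unfold Ta
  by_cases hg : 1 ≤ i ∧ i ≤ K ∧ 2 ≤ K
  · rw [if_pos hg]
    by_cases h1 : i ≤ K - 1 <;> by_cases h2 : 2 ≤ i <;>
      simp [h1, h2, hg, mem_union, mem_image, mem_Icc, Prod.mk.injEq, eq_comm] <;>
      constructor <;> intro h <;> omega
  · rw [if_neg hg]; simp [hg]

def Tdig (K i : ℕ) : Digr ℕ where
  verts := Tv K i
  arcs := Ta K i
  arcs_sub := by
    rintro ⟨a, b⟩ h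
    rw [mem_Ta] at h
    constructor <;> rw [mem_Tv] <;>
      exact ⟨h.1, by rcases h with ⟨⟨h1, h2, hK⟩, h⟩; omega⟩
  no_loops := by
    rintro ⟨a, b⟩ h
    rw [mem_Ta] at h
    rcases h with ⟨⟨h1, h2, hK⟩, h⟩
    simp only [ne_eq]
    omega

end GICaux

section GICaux2
open Finset

variable {K i : ℕ}

lemma Tdig_arcs : (Tdig K i).arcs = Ta K i := rfl
lemma Tdig_verts : (Tdig K i).verts = Tv K i := rfl

lemma Tpath_char (hi1 : 1 ≤ i) (hi2 : i ≤ K) (hK : 2 ≤ K) {p : List ℕ}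
    (hp : (Tdig K i).IsPath p) (hh : p.head? = some i) :
    p = [i] ∨ (i ≤ K - 1 ∧ p = [i, K + i]) ∨ (2 ≤ i ∧ p = [i, 3 * K - i]) ∨
    (∃ j, i + 1 ≤ j ∧ j ≤ K ∧ p = [i, K + i, j]) ∨
    (∃ j, 1 ≤ j ∧ j ≤ i - 1 ∧ p = [i, 3 * K - i, j]) := by
  obtain ⟨hne, hnd, hv, hch⟩ := hp
  rcases p with _ | ⟨a, rest⟩
  · exact absurd rfl hne
  simp only [List.head?_cons, Option.some.injEq] at hh
  subst a
  rcases rest with _ | ⟨m, rest2⟩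
  · exact Or.inl rfl
  simp only [List.Chain', List.isChain_cons_cons] at hch
  obtain ⟨harc1, hch⟩ := hch
  rw [Tdig_arcs, mem_Ta] at harc1
  have hm : (i ≤ K - 1 ∧ m = K + i) ∨ (2 ≤ i ∧ m = 3 * K - i) := by omega
  rcases rest2 with _ | ⟨j, rest3⟩
  · rcases hm with ⟨h1, rfl⟩ | ⟨h1, rfl⟩
    · exact Or.inr (Or.inl ⟨h1, rfl⟩)
    · exact Or.inr (Or.inr (Or.inl ⟨h1, rfl⟩))
  simp only [List.Chain', List.isChain_cons_cons] at hch
  obtain ⟨harc2, hch⟩ := hch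
  rw [Tdig_arcs, mem_Ta] at harc2
  have hj : (i ≤ K - 1 ∧ m = K + i ∧ i + 1 ≤ j ∧ j ≤ K) ∨
      (2 ≤ i ∧ m = 3 * K - i ∧ 1 ≤ j ∧ j ≤ i - 1) := by omega
  rcases rest3 with _ | ⟨w, rest4⟩
  · rcases hj with ⟨h1, rfl, h2, h3⟩ | ⟨h1, rfl, h2, h3⟩
    · exact Or.inr (Or.inr (Or.inr (Or.inl ⟨j, h2, h3, rfl⟩)))
    · exact Or.inr (Or.inr (Or.inr (Or.inr ⟨j, h2, h3, rfl⟩)))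
  exfalso
  simp only [List.Chain', List.isChain_cons_cons] at hch
  obtain ⟨harc3, -⟩ := hch
  rw [Tdig_arcs, mem_Ta] at harc3
  omega

lemma Tdig_leaves (hi1 : 1 ≤ i) (hi2 : i ≤ K) (hK : 2 ≤ K) :
    (Tdig K i).leaves = (Icc 1 K).erase i := by
  ext v
  simp only [Digr.leaves, mem_filter, mem_erase, mem_Icc, Tdig_verts,
    Finset.eq_empty_iff_forall_notMem]
  constructor
  · rintro ⟨hv, hout⟩
    simp only [mem_outNbr, Tdig_arcs] at hout
    rw [mem_Tv] at hv
    rcases hv.2 with h | ⟨h1, rfl⟩ | ⟨h1, rfl⟩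
    · refine ⟨?_, h⟩
      intro hvi
      subst v
      by_cases hiK : i ≤ K - 1
      · exact hout (K + i) (mem_Ta.mpr ⟨⟨hi1, hi2, hK⟩, Or.inl ⟨hiK, rfl, rfl⟩⟩)
      · exact hout (3 * K - i)
          (mem_Ta.mpr ⟨⟨hi1, hi2, hK⟩, Or.inr (Or.inr (Or.inl ⟨by omega, rfl, rfl⟩))⟩)
    · exact absurd (mem_Ta.mpr ⟨⟨hi1, hi2, hK⟩, Or.inr (Or.inl ⟨rfl, by omega, le_rfl⟩)⟩)
        (hout K)
    · exact absurd (mem_Ta.mpr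
        ⟨⟨hi1, hi2, hK⟩, Or.inr (Or.inr (Or.inr ⟨rfl, le_rfl, by omega⟩))⟩) (hout 1)
  · rintro ⟨hne, h1, h2⟩
    refine ⟨mem_Tv.mpr ⟨⟨hi1, hi2, hK⟩, Or.inl ⟨h1, h2⟩⟩, ?_⟩
    intro u hu
    simp only [mem_outNbr, Tdig_arcs, mem_Ta] at hu
    omega

end GICaux2

section GICaux3
open Finset

variable {K i : ℕ}

lemma Tdig_outArb (hi1 : 1 ≤ i) (hi2 : i ≤ K) (hK : 2 ≤ K) : (Tdig K i).IsOutArb i := by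
  have hg : 1 ≤ i ∧ i ≤ K ∧ 2 ≤ K := ⟨hi1, hi2, hK⟩
  have hmemI : ∀ v, 1 ≤ v → v ≤ K → v ∈ (Tdig K i).verts := fun v h1 h2 =>
    mem_Tv.mpr ⟨hg, Or.inl ⟨h1, h2⟩⟩
  have hiv : i ∈ (Tdig K i).verts := hmemI i hi1 hi2
  have path2a : i ≤ K - 1 → (Tdig K i).IsPath [i, K + i] := by
    intro h
    refine ⟨by simp, by simp; omega, ?_, ?_⟩
    · intro v hv
      simp only [List.mem_cons, List.mem_singleton, List.not_mem_nil, or_false] at hv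
      rcases hv with rfl | rfl
      · exact hiv
      · exact mem_Tv.mpr ⟨hg, Or.inr (Or.inl ⟨h, rfl⟩)⟩
    · simp only [List.Chain', List.isChain_cons_cons, List.isChain_singleton, and_true, Tdig_arcs]
      exact mem_Ta.mpr ⟨hg, Or.inl ⟨h, rfl, rfl⟩⟩
  have path2b : 2 ≤ i → (Tdig K i).IsPath [i, 3 * K - i] := by
    intro h
    refine ⟨by simp, by simp; omega, ?_, ?_⟩
    · intro v hv
      simp only [List.mem_cons, List.mem_singleton, List.not_mem_nil, or_false] at hv
      rcases hv with rfl | rfl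
      · exact hiv
      · exact mem_Tv.mpr ⟨hg, Or.inr (Or.inr ⟨h, rfl⟩)⟩
    · simp only [List.Chain', List.isChain_cons_cons, List.isChain_singleton, and_true, Tdig_arcs]
      exact mem_Ta.mpr ⟨hg, Or.inr (Or.inr (Or.inl ⟨h, rfl, rfl⟩))⟩
  have path3a : ∀ j, i + 1 ≤ j → j ≤ K → (Tdig K i).IsPath [i, K + i, j] := by
    intro j h1 h2
    refine ⟨by simp, by simp; omega, ?_, ?_⟩
    · intro v hv
      simp only [List.mem_cons, List.mem_singleton, List.not_mem_nil, or_false] at hv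
      rcases hv with rfl | rfl | h
      · exact hiv
      · exact mem_Tv.mpr ⟨hg, Or.inr (Or.inl ⟨by omega, rfl⟩)⟩
      · rw [h]; exact hmemI j (by omega) h2
    · simp only [List.Chain', List.isChain_cons_cons, List.isChain_singleton, and_true, Tdig_arcs]
      exact ⟨mem_Ta.mpr ⟨hg, Or.inl ⟨by omega, rfl, rfl⟩⟩,
        mem_Ta.mpr ⟨hg, Or.inr (Or.inl ⟨rfl, h1, h2⟩)⟩⟩
  have path3b : ∀ j, 1 ≤ j → j ≤ i - 1 → (Tdig K i).IsPath [i, 3 * K - i, j] := by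
    intro j h1 h2
    refine ⟨by simp, by simp; omega, ?_, ?_⟩
    · intro v hv
      simp only [List.mem_cons, List.mem_singleton, List.not_mem_nil, or_false] at hv
      rcases hv with rfl | rfl | h
      · exact hiv
      · exact mem_Tv.mpr ⟨hg, Or.inr (Or.inr ⟨by omega, rfl⟩)⟩
      · rw [h]; exact hmemI j h1 (by omega)
    · simp only [List.Chain', List.isChain_cons_cons, List.isChain_singleton, and_true, Tdig_arcs]
      exact ⟨mem_Ta.mpr ⟨hg, Or.inr (Or.inr (Or.inl ⟨by omega, rfl, rfl⟩))⟩,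
        mem_Ta.mpr ⟨hg, Or.inr (Or.inr (Or.inr ⟨rfl, h1, h2⟩))⟩⟩
  have path1 : (Tdig K i).IsPath [i] := ⟨by simp, by simp, by
      intro v hv; simp at hv; subst hv; exact hiv, by exact List.isChain_singleton _⟩
  refine ⟨hiv, ?_⟩
  intro v hv
  rw [Tdig_verts, mem_Tv] at hv
  rcases hv.2 with ⟨h1, h2⟩ | ⟨h1, rfl⟩ | ⟨h1, rfl⟩
  · -- v inner
    rcases lt_trichotomy v i with hvi | hvi | hvi
    · -- v < i : path [i, 3K-i, v]
      refine ⟨[i, 3 * K - i, v], ⟨path3b v h1 (by omega), by simp, by simp⟩, ?_⟩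
      rintro q ⟨hq, hqh, hql⟩
      rcases Tpath_char hi1 hi2 hK hq hqh with rfl | ⟨hc, rfl⟩ | ⟨hc, rfl⟩ |
          ⟨j, hc1, hc2, rfl⟩ | ⟨j, hc1, hc2, rfl⟩ <;>
        simp only [List.getLast?_cons_cons, List.getLast?_singleton,
          Option.some.injEq] at hql <;>
        first
          | (exfalso; omega)
          | (subst hql; rfl)
    · -- v = i : path [i]
      subst v
      refine ⟨[i], ⟨path1, by simp, by simp⟩, ?_⟩
      rintro q ⟨hq, hqh, hql⟩
      rcases Tpath_char hi1 hi2 hK hq hqh with rfl | ⟨hc, rfl⟩ | ⟨hc, rfl⟩ |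
          ⟨j, hc1, hc2, rfl⟩ | ⟨j, hc1, hc2, rfl⟩ <;>
        simp only [List.getLast?_cons_cons, List.getLast?_singleton,
          Option.some.injEq] at hql <;>
        first
          | (exfalso; omega)
          | (subst hql; rfl)
          | rfl
    · -- v > i : path [i, K+i, v]
      refine ⟨[i, K + i, v], ⟨path3a v (by omega) h2, by simp, by simp⟩, ?_⟩
      rintro q ⟨hq, hqh, hql⟩
      rcases Tpath_char hi1 hi2 hK hq hqh with rfl | ⟨hc, rfl⟩ | ⟨hc, rfl⟩ |
          ⟨j, hc1, hc2, rfl⟩ | ⟨j, hc1, hc2, rfl⟩ <;>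
        simp only [List.getLast?_cons_cons, List.getLast?_singleton,
          Option.some.injEq] at hql <;>
        first
          | (exfalso; omega)
          | (subst hql; rfl)
  · -- v = K + i
    refine ⟨[i, K + i], ⟨path2a h1, by simp, by simp⟩, ?_⟩
    rintro q ⟨hq, hqh, hql⟩
    rcases Tpath_char hi1 hi2 hK hq hqh with rfl | ⟨hc, rfl⟩ | ⟨hc, rfl⟩ |
        ⟨j, hc1, hc2, rfl⟩ | ⟨j, hc1, hc2, rfl⟩ <;>
      simp only [List.getLast?_cons_cons, List.getLast?_singleton,
        Option.some.injEq] at hql <;>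
      first
        | (exfalso; omega)
        | rfl
  · -- v = 3K - i
    refine ⟨[i, 3 * K - i], ⟨path2b h1, by simp, by simp⟩, ?_⟩
    rintro q ⟨hq, hqh, hql⟩
    rcases Tpath_char hi1 hi2 hK hq hqh with rfl | ⟨hc, rfl⟩ | ⟨hc, rfl⟩ |
        ⟨j, hc1, hc2, rfl⟩ | ⟨j, hc1, hc2, rfl⟩ <;>
      simp only [List.getLast?_cons_cons, List.getLast?_singleton,
        Option.some.injEq] at hql <;>
      first
        | (exfalso; omega)
        | rfl

end GICaux3

section GICaux4
open Finset

variable {K : ℕ} {D : Digr ℕ}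

def ArcSpec (K : ℕ) (a : ℕ × ℕ) : Prop :=
  ((a.1 = 1 ∧ a.2 = K + 1) ∨
   (a.1 = K ∧ a.2 = 2 * K) ∨
   (∃ i, 2 ≤ i ∧ i ≤ K - 1 ∧ a.1 = i ∧ (a.2 = K + i ∨ a.2 = 3 * K - i)) ∨
   (a.1 = K + 1 ∧ 2 ≤ a.2 ∧ a.2 ≤ K) ∨
   (a.1 = 2 * K ∧ 1 ≤ a.2 ∧ a.2 ≤ K - 1) ∨
   (∃ i, 2 ≤ i ∧ i ≤ K - 1 ∧ a.1 = K + i ∧ i + 1 ≤ a.2 ∧ a.2 ≤ K) ∨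
   (∃ i, 2 ≤ i ∧ i ≤ K - 1 ∧ a.1 = 3 * K - i ∧ 1 ≤ a.2 ∧ a.2 ≤ i - 1))

lemma arcNF (hK : 2 ≤ K) (harcs : ∀ a : ℕ × ℕ, a ∈ D.arcs ↔ ArcSpec K a) :
    ∀ a b : ℕ, (a, b) ∈ D.arcs ↔
      ((1 ≤ a ∧ a ≤ K - 1 ∧ b = K + a) ∨
       (2 ≤ a ∧ a ≤ K ∧ b = 3 * K - a) ∨
       (∃ i, 1 ≤ i ∧ i ≤ K - 1 ∧ a = K + i ∧ i + 1 ≤ b ∧ b ≤ K) ∨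
       (∃ i, 2 ≤ i ∧ i ≤ K ∧ a = 3 * K - i ∧ 1 ≤ b ∧ b ≤ i - 1)) := by
  intro a b
  rw [harcs (a, b)]
  unfold ArcSpec
  simp only []
  constructor
  · rintro (⟨rfl, rfl⟩ | ⟨rfl, rfl⟩ | ⟨i, h1, h2, rfl, rfl | rfl⟩ | ⟨rfl, h1, h2⟩ |
      ⟨rfl, h1, h2⟩ | ⟨i, h1, h2, rfl, h3, h4⟩ | ⟨i, h1, h2, rfl, h3, h4⟩)
    · exact Or.inl ⟨by omega, by omega, by omega⟩
    · exact Or.inr (Or.inl ⟨hK, le_rfl, by omega⟩)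
    · exact Or.inl ⟨by omega, by omega, rfl⟩
    · exact Or.inr (Or.inl ⟨h1, by omega, rfl⟩)
    · exact Or.inr (Or.inr (Or.inl ⟨1, by omega, by omega, by omega, by omega, h2⟩))
    · exact Or.inr (Or.inr (Or.inr ⟨K, hK, le_rfl, by omega, by omega, by omega⟩))
    · exact Or.inr (Or.inr (Or.inl ⟨i, by omega, h2, rfl, h3, h4⟩))
    · exact Or.inr (Or.inr (Or.inr ⟨i, h1, by omega, rfl, h3, h4⟩))
  · rintro (⟨h1, h2, rfl⟩ | ⟨h1, h2, rfl⟩ | ⟨i, h1, h2, rfl, h3, h4⟩ | ⟨i, h1, h2, rfl, h3, h4⟩)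
    · by_cases ha : a = 1
      · subst ha; exact Or.inl ⟨rfl, rfl⟩
      · exact Or.inr (Or.inr (Or.inl ⟨a, by omega, h2, rfl, Or.inl rfl⟩))
    · by_cases ha : a = K
      · subst ha; exact Or.inr (Or.inl ⟨rfl, by omega⟩)
      · exact Or.inr (Or.inr (Or.inl ⟨a, h1, by omega, rfl, Or.inr rfl⟩))
    · by_cases hi : i = 1
      · subst hi; exact Or.inr (Or.inr (Or.inr (Or.inl ⟨by omega, by omega, h4⟩)))
      · exact Or.inr (Or.inr (Or.inr (Or.inr (Or.inr (Or.inl ⟨i, by omega, h2, rfl, h3, h4⟩)))))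
    · by_cases hi : i = K
      · subst hi
        exact Or.inr (Or.inr (Or.inr (Or.inr (Or.inl ⟨by omega, h3, by omega⟩))))
      · exact Or.inr (Or.inr (Or.inr (Or.inr (Or.inr (Or.inr ⟨i, h1, by omega, rfl, h3, h4⟩)))))

lemma arc_bounds (hK : 2 ≤ K) (hNF : ∀ a b : ℕ, (a, b) ∈ D.arcs ↔
      ((1 ≤ a ∧ a ≤ K - 1 ∧ b = K + a) ∨
       (2 ≤ a ∧ a ≤ K ∧ b = 3 * K - a) ∨
       (∃ i, 1 ≤ i ∧ i ≤ K - 1 ∧ a = K + i ∧ i + 1 ≤ b ∧ b ≤ K) ∨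
       (∃ i, 2 ≤ i ∧ i ≤ K ∧ a = 3 * K - i ∧ 1 ≤ b ∧ b ≤ i - 1)))
    {a b : ℕ} (h : (a, b) ∈ D.arcs) :
    (1 ≤ a ∧ a ≤ K ∧ K + 1 ≤ b ∧ b ≤ 3 * K - 2) ∨
    (K + 1 ≤ a ∧ a ≤ 3 * K - 2 ∧ 1 ≤ b ∧ b ≤ K) := by
  rw [hNF] at h
  rcases h with h | h | ⟨i, h⟩ | ⟨i, h⟩ <;> omega

lemma no_two_cycle (hK : 2 ≤ K) (hNF : ∀ a b : ℕ, (a, b) ∈ D.arcs ↔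
      ((1 ≤ a ∧ a ≤ K - 1 ∧ b = K + a) ∨
       (2 ≤ a ∧ a ≤ K ∧ b = 3 * K - a) ∨
       (∃ i, 1 ≤ i ∧ i ≤ K - 1 ∧ a = K + i ∧ i + 1 ≤ b ∧ b ≤ K) ∨
       (∃ i, 2 ≤ i ∧ i ≤ K ∧ a = 3 * K - i ∧ 1 ≤ b ∧ b ≤ i - 1)))
    {a b : ℕ} (h1 : (a, b) ∈ D.arcs) (h2 : (b, a) ∈ D.arcs) : False := by
  rw [hNF] at h1 h2
  rcases h1 with h1 | h1 | ⟨i, h1⟩ | ⟨i, h1⟩ <;>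
    rcases h2 with h2 | h2 | ⟨i', h2⟩ | ⟨i', h2⟩ <;> omega

lemma alt_count (p : ℕ → Bool) (R : ℕ → ℕ → Prop) (hR : ∀ a b, R a b → p a = !p b) :
    ∀ n (l : List ℕ), l.length ≤ n → l.Chain' R → ∀ a b, l.head? = some a →
      l.getLast? = some b → p a = true → p b = false → 2 * l.countP p = l.length := by
  intro n
  induction n with
  | zero =>
    intro l hl _ a b hh _ _ _
    interval_cases hlen : l.length
    rcases List.length_eq_zero_iff.mp hlen with rfl
    simp at hh
  | succ n ih =>
    intro l hl hch a b hh hlast hpa hpb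
    rcases l with _ | ⟨x, _ | ⟨y, t⟩⟩
    · simp at hh
    · simp only [List.head?_cons, Option.some.injEq] at hh
      simp only [List.getLast?_singleton, Option.some.injEq] at hlast
      subst hh; subst hlast
      rw [hpa] at hpb; exact absurd hpb (by simp)
    · simp only [List.head?_cons, Option.some.injEq] at hh
      subst hh
      simp only [List.Chain', List.isChain_cons_cons] at hch
      obtain ⟨hxy, hch⟩ := hch
      have hpy : p y = false := by
        have := hR _ _ hxy; rw [hpa] at this
        cases hy : p y <;> simp [hy] at this ⊢
      rcases t with _ | ⟨z, t'⟩
      · simp only [List.getLast?_cons_cons, List.getLast?_singleton, Option.some.injEq] at hlast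
        subst hlast
        simp [List.countP_cons, hpa, hpy]
      · simp only [List.Chain', List.isChain_cons_cons] at hch
        obtain ⟨hyz, hch⟩ := hch
        have hpz : p z = true := by
          have := hR _ _ hyz; rw [hpy] at this
          cases hz : p z <;> simp [hz] at this ⊢
        have hlast' : (z :: t').getLast? = some b := by
          rw [List.getLast?_cons_cons, List.getLast?_cons_cons] at hlast
          exact hlast
        have := ih (z :: t') (by simp at hl ⊢; omega) hch z b rfl hlast' hpz hpb
        simp [List.countP_cons, hpa, hpy, hpz] at this ⊢
        omega

end GICaux4

section GICaux5
open Finset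

variable {K : ℕ} {D : Digr ℕ}

/-- shorthand for the normal form hypothesis -/
def NF (K : ℕ) (D : Digr ℕ) : Prop := ∀ a b : ℕ, (a, b) ∈ D.arcs ↔
      ((1 ≤ a ∧ a ≤ K - 1 ∧ b = K + a) ∨
       (2 ≤ a ∧ a ≤ K ∧ b = 3 * K - a) ∨
       (∃ i, 1 ≤ i ∧ i ≤ K - 1 ∧ a = K + i ∧ i + 1 ≤ b ∧ b ≤ K) ∨
       (∃ i, 2 ≤ i ∧ i ≤ K ∧ a = 3 * K - i ∧ 1 ≤ b ∧ b ≤ i - 1))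

lemma no_I_cycle_s19 (hK : 2 ≤ K) (hverts : D.verts = Icc 1 (3 * K - 2)) (hNF : NF K D) :
    ∀ c : List ℕ, D.IsCycle c → (c.toFinset ∩ Icc 1 K).card ≠ 1 := by
  intro c ⟨⟨hne, hnd, hv, hch⟩, a, b, hh, hl, hba⟩ hcard
  -- the boolean predicate "is inner"
  set p : ℕ → Bool := fun v => decide (v ≤ K) with hp
  have hflip : ∀ u w, (u, w) ∈ D.arcs → p u = !p w := by
    intro u w huw
    have := arc_bounds hK hNF huw
    simp only [hp, Bool.decide_coe]
    rcases this with h | h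
    · simp [decide_eq_true (h.2.1), Nat.not_le.mpr (by omega : K < w)]
    · simp [decide_eq_true h.2.2.2, Nat.not_le.mpr (by omega : K < u)]
  -- relate card to countP
  have hcount : c.countP p = (c.toFinset ∩ Icc 1 K).card := by
    have h1 : c.toFinset ∩ Icc 1 K = c.toFinset.filter (fun v => p v) := by
      ext v
      simp only [mem_inter, mem_filter, mem_Icc, List.mem_toFinset, hp, decide_eq_true_eq]
      constructor
      · rintro ⟨h1, h2, h3⟩; exact ⟨h1, h3⟩
      · rintro ⟨h1, h2⟩
        have := hv v h1
        rw [hverts, mem_Icc] at this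
        exact ⟨h1, this.1, h2⟩
    rw [h1, ← List.toFinset_filter, List.card_toFinset, List.Nodup.dedup (hnd.filter _),
      ← List.countP_eq_length_filter]
  have hlen : 2 * c.countP p = c.length := by
    rcases hpa : p a with _ | _
    · -- a not inner, b inner
      have hpb : p b = true := by
        have := hflip b a hba; rw [hpa] at this; simpa using this
      have halt := alt_count (fun v => !p v) (fun u w => (u, w) ∈ D.arcs)
        (fun u w h => by have := hflip u w h; cases hw : p w <;> cases hu : p u <;> rw [hu, hw] at this <;> simp [hu, hw] at this ⊢) c.length c le_rfl hch a b hh hl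
        (by simp [hpa]) (by simp [hpb])
      have hsum := List.length_eq_countP_add_countP (p := p) (l := c)
      have : c.countP (fun v => !p v) = c.countP (fun a => ¬ p a) := by
        apply List.countP_congr; intro x _; simp
      omega
    · have hpb : p b = false := by
        have := hflip b a hba; rw [hpa] at this
        cases hb : p b <;> simp [hb] at this ⊢
      exact alt_count p (fun u w => (u, w) ∈ D.arcs) hflip c.length c le_rfl hch a b hh hl
        hpa hpb
  rw [hcount, hcard] at hlen
  -- so c has exactly two elements
  rcases c with _ | ⟨x, _ | ⟨y, _ | ⟨z, t⟩⟩⟩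
  · simp at hh
  · simp at hlen
  · -- c = [x, y]
    simp only [List.head?_cons, Option.some.injEq] at hh
    simp only [List.getLast?_cons_cons, List.getLast?_singleton, Option.some.injEq] at hl
    subst hh; subst hl
    simp only [List.Chain', List.isChain_cons_cons] at hch
    exact no_two_cycle hK hNF hch.1 hba
  · simp at hlen

end GICaux5

section GICaux6
open Finset

/-- The index code of length `2K-1`. -/
def gcode (K t : ℕ) (x : ℕ → Fin t → ZMod 2) (k : Fin (2 * K - 1)) : Fin t → ZMod 2 :=
  if (k : ℕ) = 0 then (fun b => ∑ j ∈ Icc 1 K, x j b)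
  else fun b => x (K + (k : ℕ)) b +
    ∑ j ∈ (if (k : ℕ) ≤ K - 1 then Icc 1 (k : ℕ) else Icc (2 * K - (k : ℕ)) K), x j b

variable {K t : ℕ} {D : Digr ℕ}

lemma gcode_valid (hK : 2 ≤ K) (hverts : D.verts = Icc 1 (3 * K - 2))
    (hNF : NF K D) : IsValidCode D (gcode K t) := by
  intro x x' hF i hi hside
  rw [hverts, mem_Icc] at hi
  have hside' : ∀ j, (i, j) ∈ D.arcs → x j = x' j := fun j hj =>
    hside j ((mem_outNbr D i j).mpr hj)
  have hS : ∀ b, ∑ j ∈ Icc 1 K, x j b = ∑ j ∈ Icc 1 K, x' j b := by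
    intro b
    have h0 := congrFun (congrFun hF ⟨0, by omega⟩) b
    simpa [gcode] using h0
  have hPk1 : ∀ m, K + 1 ≤ m → m ≤ 2 * K - 1 → ∀ b,
      x m b + ∑ j ∈ Icc 1 (m - K), x j b = x' m b + ∑ j ∈ Icc 1 (m - K), x' j b := by
    intro m h1 h2 b
    have h0 := congrFun (congrFun hF ⟨m - K, by omega⟩) b
    simp only [gcode, Fin.val_mk] at h0
    rw [if_neg (by omega : ¬ (m - K = 0)), if_neg (by omega : ¬ (m - K = 0))] at h0
    rw [if_pos (by omega : m - K ≤ K - 1)] at h0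
    rw [(by omega : K + (m - K) = m)] at h0
    exact h0
  have hPk2 : ∀ m, 2 * K ≤ m → m ≤ 3 * K - 2 → ∀ b,
      x m b + ∑ j ∈ Icc (3 * K - m) K, x j b
      = x' m b + ∑ j ∈ Icc (3 * K - m) K, x' j b := by
    intro m h1 h2 b
    have h0 := congrFun (congrFun hF ⟨m - K, by omega⟩) b
    simp only [gcode, Fin.val_mk] at h0
    rw [if_neg (by omega : ¬ (m - K = 0)), if_neg (by omega : ¬ (m - K = 0))] at h0
    rw [if_neg (by omega : ¬ (m - K ≤ K - 1))] at h0
    rw [(by omega : K + (m - K) = m), (by omega : 2 * K - (m - K) = 3 * K - m)] at h0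
    exact h0
  have hkey : ∀ (A B : Finset ℕ), Icc 1 K = A ∪ B → Disjoint A B →
      (∀ j ∈ B, x j = x' j) → ∀ b, ∑ j ∈ A, x j b = ∑ j ∈ A, x' j b := by
    intro A B hAB hd hB b
    have h := hS b
    rw [hAB, Finset.sum_union hd, Finset.sum_union hd] at h
    have hBe : ∑ j ∈ B, x j b = ∑ j ∈ B, x' j b :=
      Finset.sum_congr rfl (fun j hj => by rw [hB j hj])
    rw [hBe] at h
    exact add_right_cancel h
  by_cases hiK : i ≤ K
  · -- inner receiver
    have eA : i ≤ K - 1 → ∀ b, ∑ j ∈ Icc 1 i, x j b = ∑ j ∈ Icc 1 i, x' j b := by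
      intro hi1 b
      have harc : (i, K + i) ∈ D.arcs := (hNF i (K + i)).mpr (Or.inl ⟨hi.1, hi1, rfl⟩)
      have hsd := hside' _ harc
      have h := hPk1 (K + i) (by omega) (by omega) b
      rw [(by omega : K + i - K = i), hsd] at h
      exact add_left_cancel h
    have eB : 2 ≤ i → ∀ b, ∑ j ∈ Icc i K, x j b = ∑ j ∈ Icc i K, x' j b := by
      intro hi2 b
      have harc : (i, 3 * K - i) ∈ D.arcs := (hNF i (3 * K - i)).mpr
        (Or.inr (Or.inl ⟨hi2, hiK, rfl⟩))
      have hsd := hside' _ harc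
      have h := hPk2 (3 * K - i) (by omega) (by omega) b
      rw [(by omega : 3 * K - (3 * K - i) = i), hsd] at h
      exact add_left_cancel h
    by_cases hi1 : i = 1
    · subst hi1
      funext b
      have h := eA (by omega) b
      simpa using h
    · by_cases hiKK : i = K
      · subst hiKK
        funext b
        have h := eB hK b
        simpa using h
      · -- middle
        have hU : Icc 1 K = Icc 1 i ∪ Icc (i + 1) K := by
          ext v; simp only [mem_Icc, mem_union]; omega
        have hdisj : Disjoint (Icc 1 i) (Icc (i + 1) K) := by
          simp only [Finset.disjoint_left, mem_Icc]; omega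
        have hIns : Icc i K = insert i (Icc (i + 1) K) := by
          ext v; simp only [mem_Icc, mem_insert]; omega
        have hnotm : i ∉ Icc (i + 1) K := by simp [mem_Icc]
        funext b
        have h1 := eA (by omega) b
        have h2 := eB (by omega) b
        have h3 := hS b
        rw [hU, Finset.sum_union hdisj, Finset.sum_union hdisj, h1] at h3
        have h4 := add_left_cancel h3
        rw [hIns, Finset.sum_insert hnotm, Finset.sum_insert hnotm, h4] at h2
        exact add_right_cancel h2
  · -- non-inner receiver
    by_cases him : i ≤ 2 * K - 1
    · have hknown : ∀ j ∈ Icc (i - K + 1) K, x j = x' j := by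
        intro j hj
        rw [mem_Icc] at hj
        exact hside' j ((hNF i j).mpr (Or.inr (Or.inr (Or.inl
          ⟨i - K, by omega, by omega, by omega, by omega, hj.2⟩))))
      have hU : Icc 1 K = Icc 1 (i - K) ∪ Icc (i - K + 1) K := by
        ext v; simp only [mem_Icc, mem_union]; omega
      have hdisj : Disjoint (Icc 1 (i - K)) (Icc (i - K + 1) K) := by
        simp only [Finset.disjoint_left, mem_Icc]; omega
      funext b
      have hsum := hkey _ _ hU hdisj hknown b
      have h := hPk1 i (by omega) him b
      rw [hsum] at h
      exact add_right_cancel h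
    · have hknown : ∀ j ∈ Icc 1 (3 * K - i - 1), x j = x' j := by
        intro j hj
        rw [mem_Icc] at hj
        exact hside' j ((hNF i j).mpr (Or.inr (Or.inr (Or.inr
          ⟨3 * K - i, by omega, by omega, by omega, hj.1, by omega⟩))))
      have hU : Icc 1 K = Icc (3 * K - i) K ∪ Icc 1 (3 * K - i - 1) := by
        ext v; simp only [mem_Icc, mem_union]; omega
      have hdisj : Disjoint (Icc (3 * K - i) K) (Icc 1 (3 * K - i - 1)) := by
        simp only [Finset.disjoint_left, mem_Icc]; omega
      funext b
      have hsum := hkey _ _ hU hdisj hknown b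
      have h := hPk2 i (by omega) hi.2 b
      rw [hsum] at h
      exact add_right_cancel h

end GICaux6

section GICaux7
open Finset

variable {K : ℕ} {D : Digr ℕ}

lemma ppath_char (hK : 2 ≤ K) (hverts : D.verts = Icc 1 (3 * K - 2)) (hNF : NF K D)
    {i j : ℕ} {p : List ℕ} (hp : D.IsPPathFromTo (Icc 1 K) i j p) :
    ∃ m, p = [i, m, j] ∧ (i, m) ∈ D.arcs ∧ (m, j) ∈ D.arcs := by
  obtain ⟨⟨hne, hnd, hv, hch⟩, hh, hl, hiI, hjI, hij, hmid⟩ := hp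
  rw [mem_Icc] at hiI hjI
  rcases p with _ | ⟨a, rest⟩
  · exact absurd rfl hne
  simp only [List.head?_cons, Option.some.injEq] at hh
  subst a
  rcases rest with _ | ⟨m, rest2⟩
  · simp only [List.getLast?_singleton, Option.some.injEq] at hl
    exact absurd hl hij
  simp only [List.Chain', List.isChain_cons_cons] at hch
  obtain ⟨h1, hch⟩ := hch
  have hm := arc_bounds hK hNF h1
  have hmK : K + 1 ≤ m ∧ m ≤ 3 * K - 2 := by omega
  rcases rest2 with _ | ⟨v, rest3⟩
  · simp only [List.getLast?_cons_cons, List.getLast?_singleton, Option.some.injEq] at hl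
    omega
  simp only [List.Chain', List.isChain_cons_cons] at hch
  obtain ⟨h2, hch⟩ := hch
  have hvb := arc_bounds hK hNF h2
  have hvK : 1 ≤ v ∧ v ≤ K := by omega
  rcases rest3 with _ | ⟨w, rest4⟩
  · simp only [List.getLast?_cons_cons, List.getLast?_singleton, Option.some.injEq] at hl
    subst v
    exact ⟨m, rfl, h1, h2⟩
  · exfalso
    have hvmid : v ∈ ((i :: m :: v :: w :: rest4).drop 1).dropLast := by
      simp [List.dropLast]
    have := hmid v hvmid
    rw [mem_Icc] at this
    exact this hvK

lemma ppath_exu (hK : 2 ≤ K) (hverts : D.verts = Icc 1 (3 * K - 2)) (hNF : NF K D) :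
    ∀ i ∈ Icc 1 K, ∀ j ∈ Icc 1 K, i ≠ j →
      ∃! p : List ℕ, D.IsPPathFromTo (Icc 1 K) i j p := by
  intro i hi j hj hij
  rw [mem_Icc] at hi hj
  -- the unique middle vertex
  have hmain : ∀ m, (i, m) ∈ D.arcs → (m, j) ∈ D.arcs →
      m = (if i < j then K + i else 3 * K - i) := by
    intro m h1 h2
    rw [hNF] at h1 h2
    by_cases hlt : i < j
    · rw [if_pos hlt]
      rcases h1 with h1 | h1 | ⟨i', h1⟩ | ⟨i', h1⟩ <;>
        rcases h2 with h2 | h2 | ⟨i'', h2⟩ | ⟨i'', h2⟩ <;> omega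
    · rw [if_neg hlt]
      rcases h1 with h1 | h1 | ⟨i', h1⟩ | ⟨i', h1⟩ <;>
        rcases h2 with h2 | h2 | ⟨i'', h2⟩ | ⟨i'', h2⟩ <;> omega
  set m := if i < j then K + i else 3 * K - i with hm
  have hmb : K + 1 ≤ m ∧ m ≤ 3 * K - 2 := by
    rw [hm]; split <;> omega
  have ha1 : (i, m) ∈ D.arcs := by
    rw [hNF, hm]
    by_cases hlt : i < j
    · rw [if_pos hlt]; exact Or.inl ⟨hi.1, by omega, rfl⟩
    · rw [if_neg hlt]; exact Or.inr (Or.inl ⟨by omega, hi.2, rfl⟩)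
  have ha2 : (m, j) ∈ D.arcs := by
    rw [hNF, hm]
    by_cases hlt : i < j
    · rw [if_pos hlt]
      exact Or.inr (Or.inr (Or.inl ⟨i, by omega, by omega, rfl, by omega, hj.2⟩))
    · rw [if_neg hlt]
      exact Or.inr (Or.inr (Or.inr ⟨i, by omega, hi.2, rfl, hj.1, by omega⟩))
  refine ⟨[i, m, j], ⟨⟨by simp, by simp; omega, ?_, ?_⟩, by simp, by simp,
    by rw [mem_Icc]; exact hi, by rw [mem_Icc]; exact hj, hij, ?_⟩, ?_⟩
  · intro v hv
    rw [hverts, mem_Icc]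
    simp only [List.mem_cons, List.not_mem_nil, or_false] at hv
    rcases hv with rfl | rfl | rfl <;> omega
  · simp only [List.Chain', List.isChain_cons_cons, List.isChain_singleton, and_true]
    exact ⟨ha1, ha2⟩
  · intro v hv
    simp only [List.drop, List.dropLast, List.mem_singleton] at hv
    subst v
    rw [mem_Icc]
    omega
  · rintro q hq
    obtain ⟨m', rfl, hb1, hb2⟩ := ppath_char hK hverts hNF hq
    rw [hmain m' hb1 hb2]

end GICaux7

section GICaux8
open Finset

lemma Ta_sub_arcs {K : ℕ} {D : Digr ℕ} (hK : 2 ≤ K) (hNF : NF K D) :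
    ∀ i, 1 ≤ i → i ≤ K → ∀ a b : ℕ, (a, b) ∈ Ta K i → (a, b) ∈ D.arcs := by
  intro i h1 h2 a b hab
  rw [mem_Ta] at hab
  rw [hNF]
  rcases hab.2 with ⟨hc, rfl, rfl⟩ | ⟨rfl, hb1, hb2⟩ | ⟨hc, rfl, rfl⟩ | ⟨rfl, hb1, hb2⟩
  · exact Or.inl ⟨h1, hc, rfl⟩
  · exact Or.inr (Or.inr (Or.inl ⟨i, h1, by omega, rfl, hb1, hb2⟩))
  · exact Or.inr (Or.inl ⟨hc, h2, rfl⟩)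
  · exact Or.inr (Or.inr (Or.inr ⟨i, by omega, h2, rfl, hb1, hb2⟩))

end GICaux8

/-- For every `K ≥ 2`, the digraph on vertices `{1, …, 3K−2}` with inner vertex set
`V_I = {1, …, K}` and the explicitly listed arcs is a `K`-GIC digraph, and hence for every
`t ≥ 1` there is a valid index code for it of length `2K − 1 = (2N+1)/3` packets,
where `N = 3K−2`. -/
theorem stmt19 (K : ℕ) (hK : 2 ≤ K) (D : Digr ℕ)
    (hverts : D.verts = Finset.Icc 1 (3 * K - 2))
    (harcs : ∀ a : ℕ × ℕ, a ∈ D.arcs ↔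
      ((a.1 = 1 ∧ a.2 = K + 1) ∨
       (a.1 = K ∧ a.2 = 2 * K) ∨
       (∃ i, 2 ≤ i ∧ i ≤ K - 1 ∧ a.1 = i ∧ (a.2 = K + i ∨ a.2 = 3 * K - i)) ∨
       (a.1 = K + 1 ∧ 2 ≤ a.2 ∧ a.2 ≤ K) ∨
       (a.1 = 2 * K ∧ 1 ≤ a.2 ∧ a.2 ≤ K - 1) ∨
       (∃ i, 2 ≤ i ∧ i ≤ K - 1 ∧ a.1 = K + i ∧ i + 1 ≤ a.2 ∧ a.2 ≤ K) ∨
       (∃ i, 2 ≤ i ∧ i ≤ K - 1 ∧ a.1 = 3 * K - i ∧ 1 ≤ a.2 ∧ a.2 ≤ i - 1)))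
    (t : ℕ) (ht : 1 ≤ t) :
    (Finset.Icc 1 K).card = K ∧
    (∃ T : ℕ → Digr ℕ, D.IsGIC (Finset.Icc 1 K) T) ∧
    2 * K - 1 = (2 * (3 * K - 2) + 1) / 3 ∧
    (∃ F : (ℕ → Fin t → ZMod 2) → (Fin (2 * K - 1) → Fin t → ZMod 2),
      IsValidCode D F) := by
  have hNF : NF K D := arcNF hK harcs
  refine ⟨by rw [Nat.card_Icc]; omega, ⟨Tdig K, ?_⟩, by omega,
    ⟨gcode K t, gcode_valid hK hverts hNF⟩⟩
  refine ⟨?_, ?_, ?_, ?_, no_I_cycle_s19 hK hverts hNF, ppath_exu hK hverts hNF⟩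
  · intro v hv
    rw [Finset.mem_Icc] at hv
    rw [hverts, Finset.mem_Icc]
    omega
  · intro i hi
    rw [Finset.mem_Icc] at hi
    refine ⟨⟨?_, ?_⟩, Tdig_outArb hi.1 hi.2 hK, Tdig_leaves hi.1 hi.2 hK⟩
    · intro v hv
      rw [Tdig_verts, mem_Tv] at hv
      rw [hverts, Finset.mem_Icc]
      omega
    · rintro ⟨a, b⟩ hab
      exact Ta_sub_arcs hK hNF i hi.1 hi.2 a b hab
  · ext v
    rw [hverts]
    simp only [Finset.mem_biUnion, Finset.mem_Icc, Tdig_verts, mem_Tv]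
    constructor
    · intro hv
      by_cases hv1 : v ≤ K
      · exact ⟨1, by omega⟩
      · by_cases hv2 : v ≤ 2 * K - 1
        · exact ⟨v - K, by omega⟩
        · exact ⟨3 * K - v, by omega⟩
    · rintro ⟨i, h⟩
      omega
  · ext a
    obtain ⟨a, b⟩ := a
    rw [hNF a b]
    simp only [Finset.mem_biUnion, Finset.mem_Icc, Tdig_arcs]
    constructor
    · rintro (⟨h1, h2, rfl⟩ | ⟨h1, h2, rfl⟩ | ⟨i, h1, h2, rfl, h3, h4⟩ | ⟨i, h1, h2, rfl, h3, h4⟩)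
      · exact ⟨a, ⟨h1, by omega⟩, mem_Ta.mpr ⟨⟨h1, by omega, hK⟩, Or.inl ⟨h2, rfl, rfl⟩⟩⟩
      · exact ⟨a, ⟨by omega, h2⟩, mem_Ta.mpr ⟨⟨by omega, h2, hK⟩,
          Or.inr (Or.inr (Or.inl ⟨h1, rfl, rfl⟩))⟩⟩
      · exact ⟨i, ⟨h1, by omega⟩, mem_Ta.mpr ⟨⟨h1, by omega, hK⟩,
          Or.inr (Or.inl ⟨rfl, h3, h4⟩)⟩⟩
      · exact ⟨i, ⟨by omega, h2⟩, mem_Ta.mpr ⟨⟨by omega, h2, hK⟩,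
          Or.inr (Or.inr (Or.inr ⟨rfl, h3, h4⟩))⟩⟩
    · rintro ⟨i, hi, hTa⟩
      have := Ta_sub_arcs hK hNF i hi.1 hi.2 a b hTa
      rw [hNF] at this
      exact this
end
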